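/- arXiv:1808.02092 — 9 statements merged into one kernel-verified Lean document; each statement's English description precedes it below -/
import Mathlib

section
/- Let k be a field, A a finite-dimensional k-algebra, and M a set of finite-dimensional A-modules. If M is hyperfinite, then the family of all finite direct sums of modules belonging to M is also hyperfinite. -/
/-!
Hyperfiniteness for families of finite-dimensional modules over a
finite-dimensional algebra `A` over a field `k`, following Elek.

A finite-dimensional `A`-module is bundled as a type together with an
`A`-module structure, a compatible `k`-vector space structure, which is
finite-dimensional over `k`.
-/

universe u

structure FdModule (k A : Type u) [Field k] [Ring A] [Algebra k A] : Type (u+1) where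
  carrier : Type u
  [acg : AddCommGroup carrier]
  [modA : Module A carrier]
  [modk : Module k carrier]
  [tower : IsScalarTower k A carrier]
  [fd : FiniteDimensional k carrier]

attribute [instance] FdModule.acg FdModule.modA FdModule.modk FdModule.tower FdModule.fd

variable {k A : Type u} [Field k] [Ring A] [Algebra k A]

/-- The `k`-dimension of a finite-dimensional `A`-module. -/
noncomputable def FdModule.dim (M : FdModule k A) : ℕ := Module.finrank k M.carrier

/-- A set `𝓜` of finite-dimensional `A`-modules is *hyperfinite* if for every `ε > 0`
there is `L_ε > 0` such that every `M ∈ 𝓜` has an `A`-submodule `P` with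
`dim_k P ≥ (1 - ε) · dim_k M` which is isomorphic to a finite direct sum of modules of
`k`-dimension at most `L_ε`; equivalently, `P` is the internal direct sum of finitely
many submodules `N j` of `k`-dimension at most `L_ε`. -/
def Hyperfinite (𝓜 : Set (FdModule k A)) : Prop :=
  ∀ ε : ℝ, 0 < ε → ∃ L : ℕ, 0 < L ∧
    ∀ M ∈ 𝓜, ∃ P : Submodule A M.carrier,
      (1 - ε) * (M.dim : ℝ) ≤ (Module.finrank k P : ℝ) ∧
      ∃ (t : ℕ) (N : Fin t → Submodule A M.carrier),
        (∀ j, Module.finrank k (N j) ≤ L) ∧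
        iSupIndep N ∧ (⨆ j, N j) = P

/-- The external direct sum of a finite family of finite-dimensional `A`-modules. -/
noncomputable def FdModule.dsum {k A : Type u} [Field k] [Ring A] [Algebra k A]
    {t : ℕ} (f : Fin t → FdModule k A) : FdModule k A where
  carrier := ∀ j, (f j).carrier

section Aux

variable {k A : Type u} [Field k] [Ring A] [Algebra k A]
variable {V : Type u} [AddCommGroup V] [Module A V] [Module k V] [IsScalarTower k A V]

lemma aux_finrank_rs (P : Submodule A V) :
    Module.finrank k (P.restrictScalars k) = Module.finrank k P :=
  ((Submodule.restrictScalarsEquiv k A V P).restrictScalars k).finrank_eq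

lemma aux_rs_iSup {ι : Sort*} (S : ι → Submodule A V) :
    (⨆ i, S i).restrictScalars k = ⨆ i, (S i).restrictScalars k :=
  map_iSup (Submodule.restrictScalarsLatticeHom k A V) S

lemma aux_rs_indep {ι : Sort*} {S : ι → Submodule A V} (h : iSupIndep S) :
    iSupIndep fun i => (S i).restrictScalars k := by
  intro i
  rw [disjoint_iff]
  have hb := (h i).eq_bot
  have h2 : Submodule.restrictScalars k (⨆ (j) (_ : j ≠ i), S j)
      = ⨆ (j) (_ : j ≠ i), Submodule.restrictScalars k (S j) := by
    rw [aux_rs_iSup]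
    exact iSup_congr fun j => aux_rs_iSup _
  have h3 : Submodule.restrictScalars k ((S i) ⊓ ⨆ (j) (_ : j ≠ i), S j)
      = (S i).restrictScalars k ⊓ Submodule.restrictScalars k (⨆ (j) (_ : j ≠ i), S j) := by
    ext x; simp [Submodule.restrictScalars_mem]
  rw [← h2, ← h3, hb]
  rfl

lemma aux_sum_finrank_le {ι : Type*} [Fintype ι] {W : Type u} [AddCommGroup W] [Module k W]
    [FiniteDimensional k W] (S : ι → Submodule k W) (h : iSupIndep S) :
    ∑ i, Module.finrank k (S i) ≤ Module.finrank k ↥(⨆ i, S i) := by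
  classical
  have key : ∀ s : Finset ι, ∑ i ∈ s, Module.finrank k (S i) ≤ Module.finrank k ↥(s.sup S) := by
    intro s
    induction s using Finset.induction_on with
    | empty => simp
    | @insert a s ha ih =>
      rw [Finset.sum_insert ha, Finset.sup_insert]
      have hd : Disjoint (S a) (s.sup S) := by
        refine Disjoint.mono_right ?_ (h.disjoint_biSup (y := (s : Set ι)) (by simpa using ha))
        rw [Finset.sup_eq_iSup]
        exact le_rfl
      have hkey := Submodule.finrank_sup_add_finrank_inf_eq (S a) (s.sup S)
      rw [hd.eq_bot, finrank_bot, add_zero] at hkey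
      rw [hkey]
      exact Nat.add_le_add_left ih _
  have hu := key Finset.univ
  rwa [Finset.sup_univ_eq_iSup] at hu

end Aux

/-- if `𝓜` is hyperfinite, so is the family of all finite direct sums of
modules belonging to `𝓜`. -/
theorem stmt_2 {k A : Type u} [Field k] [Ring A] [Algebra k A] [FiniteDimensional k A]
    (𝓜 : Set (FdModule k A)) (h : Hyperfinite 𝓜) :
    Hyperfinite {X : FdModule k A |
      ∃ (t : ℕ) (f : Fin t → FdModule k A), (∀ j, f j ∈ 𝓜) ∧ X = FdModule.dsum f} := by
  intro ε hε
  obtain ⟨L, hL0, hL⟩ := h ε hε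
  refine ⟨L, hL0, ?_⟩
  rintro M ⟨tt, f, hf, rfl⟩
  classical
  choose P hP t N hNL hNindep hNsup using fun i => hL (f i) (hf i)
  -- the single-coordinate embeddings
  set e : (i : Fin tt) → ((f i).carrier →ₗ[A] ∀ j, (f j).carrier) :=
    fun i => LinearMap.single A (fun j => (f j).carrier) i with he
  have hsingle_inj : ∀ i, Function.Injective (e i) := by
    intro i
    rw [he]
    simp only [LinearMap.coe_single]
    exact Pi.single_injective i
  -- the sigma-indexed family of embedded pieces
  set Nij : (Σ i : Fin tt, Fin (t i)) → Submodule A (∀ j, (f j).carrier) :=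
    fun p => (N p.1 p.2).map (e p.1) with hNij
  have hrank_map : ∀ (i : Fin tt) (S : Submodule A (f i).carrier),
      Module.finrank k (S.map (e i)) = Module.finrank k S :=
    fun i S =>
      (((Submodule.equivMapOfInjective (e i) (hsingle_inj i) S).restrictScalars k).finrank_eq).symm
  -- independence of the sigma family
  have hindep : iSupIndep Nij := by
    rintro ⟨i0, j0⟩
    rw [Submodule.disjoint_def]
    intro x hx hx'
    obtain ⟨v, hv, rfl⟩ := Submodule.mem_map.mp hx
    have hproj : (LinearMap.proj i0 : (∀ j, (f j).carrier) →ₗ[A] _) (e i0 v) ∈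
        Submodule.map (LinearMap.proj i0)
          (⨆ (p) (_ : p ≠ (⟨i0, j0⟩ : Σ i : Fin tt, Fin (t i))), Nij p) :=
      Submodule.mem_map_of_mem hx'
    have hle : Submodule.map (LinearMap.proj (R := A) i0)
        (⨆ (p) (_ : p ≠ (⟨i0, j0⟩ : Σ i : Fin tt, Fin (t i))), Nij p) ≤
        ⨆ (j) (_ : j ≠ j0), N i0 j := by
      rw [Submodule.map_iSup]
      refine iSup_le fun p => ?_
      rw [Submodule.map_iSup]
      refine iSup_le fun hp => ?_
      obtain ⟨i, j⟩ := p
      rw [hNij]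
      dsimp only
      rw [← Submodule.map_comp]
      by_cases hii : i = i0
      · subst hii
        rw [he]
        rw [LinearMap.proj_comp_single_same, Submodule.map_id]
        have hjj : j ≠ j0 := by
          rintro rfl
          exact hp rfl
        exact le_iSup_of_le j (le_iSup_of_le hjj le_rfl)
      · rw [he, LinearMap.proj_comp_single_ne A (fun j => (f j).carrier) i0 i
          (fun hc => hii hc.symm), Submodule.map_zero]
        exact bot_le
    have hvmem : v ∈ ⨆ (j) (_ : j ≠ j0), N i0 j := by
      have hm := hle hproj
      have hpv : (LinearMap.proj i0 : (∀ j, (f j).carrier) →ₗ[A] _) (e i0 v) = v := by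
        rw [he]
        simp
      rwa [hpv] at hm
    have hv0 : v = 0 := Submodule.disjoint_def.mp (hNindep i0 j0) v hv hvmem
    rw [hv0, map_zero]
  -- the coarse family and its independence
  set Mi : Fin tt → Submodule A (∀ j, (f j).carrier) := fun i => (P i).map (e i) with hMi
  have hMindep : iSupIndep Mi := by
    intro i0
    rw [Submodule.disjoint_def]
    intro x hx hx'
    obtain ⟨v, hv, rfl⟩ := Submodule.mem_map.mp hx
    have hle : (⨆ (i) (_ : i ≠ i0), Mi i) ≤
        LinearMap.ker (LinearMap.proj (R := A) (φ := fun j => (f j).carrier) i0) := by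
      refine iSup_le fun i => iSup_le fun hi => ?_
      rintro y ⟨w, hw, rfl⟩
      rw [LinearMap.mem_ker]
      have hz : (LinearMap.proj i0).comp (e i) = 0 :=
        LinearMap.proj_comp_single_ne A (fun j => (f j).carrier) i0 i (fun hc => hi hc.symm)
      calc (LinearMap.proj i0) ((e i) w) = ((LinearMap.proj i0).comp (e i)) w := rfl
        _ = 0 := by rw [hz]; rfl
    have hker := hle hx'
    rw [LinearMap.mem_ker] at hker
    have hpv : (LinearMap.proj i0 : (∀ j, (f j).carrier) →ₗ[A] _) (e i0 v) = v := by
      rw [he]; simp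
    rw [hpv] at hker
    rw [hker, map_zero]
  -- the big submodule
  set P' : Submodule A (∀ j, (f j).carrier) := ⨆ p, Nij p with hP'
  have hP'eq : P' = ⨆ i, Mi i := by
    rw [hP', iSup_sigma]
    refine iSup_congr fun i => ?_
    rw [hMi]
    dsimp only
    rw [← hNsup i, Submodule.map_iSup]
  -- finrank bound
  have hsum : ∑ i, Module.finrank k (P i) ≤ Module.finrank k P' := by
    have hkey := aux_sum_finrank_le (fun i => (Mi i).restrictScalars k) (aux_rs_indep hMindep)
    rw [← aux_rs_iSup] at hkey
    rw [hP'eq]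
    calc ∑ i, Module.finrank k (P i)
        = ∑ i, Module.finrank k ((Mi i).restrictScalars k) := by
          refine Finset.sum_congr rfl fun i _ => ?_
          rw [aux_finrank_rs, hMi]
          exact (hrank_map i (P i)).symm
      _ ≤ Module.finrank k ((⨆ i, Mi i).restrictScalars k) := hkey
      _ = Module.finrank k ↥(⨆ i, Mi i) := aux_finrank_rs _
  have hdim : (FdModule.dsum f).dim = ∑ i, (f i).dim :=
    Module.finrank_pi_fintype k
  refine ⟨P', ?_, ?_⟩
  · calc (1 - ε) * ((FdModule.dsum f).dim : ℝ)
        = ∑ i, (1 - ε) * ((f i).dim : ℝ) := by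
          rw [hdim]
          push_cast
          rw [Finset.mul_sum]
      _ ≤ ∑ i, (Module.finrank k (P i) : ℝ) := Finset.sum_le_sum fun i _ => hP i
      _ ≤ (Module.finrank k P' : ℝ) := by exact_mod_cast hsum
  · refine ⟨Fintype.card (Σ i : Fin tt, Fin (t i)),
      fun j => Nij ((Fintype.equivFin (Σ i : Fin tt, Fin (t i))).symm j), ?_, ?_, ?_⟩
    · intro j
      exact le_trans
        (le_of_eq (hrank_map ((Fintype.equivFin (Σ i : Fin tt, Fin (t i))).symm j).1
          (N ((Fintype.equivFin (Σ i : Fin tt, Fin (t i))).symm j).1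
             ((Fintype.equivFin (Σ i : Fin tt, Fin (t i))).symm j).2)))
        (hNL _ _)
    · exact hindep.comp (Equiv.injective _)
    · exact (Fintype.equivFin (Σ i : Fin tt, Fin (t i))).symm.surjective.iSup_comp Nij
end

section
/- Let k be a field and A a finite-dimensional k-algebra. Let M and N be two sets of finite-dimensional A-modules, where N is hyperfinite. If there is some L ≥ 0 such that every M ∈ M has an A-submodule P ⊆ M with dim_k M − dim_k P ≤ L and P isomorphic to a module in N, then M is also hyperfinite. -/
/-!
Hyperfiniteness for families of finite-dimensional modules over a
finite-dimensional algebra `A` over a field `k`, following Elek.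

A finite-dimensional `A`-module is bundled as a type together with an
`A`-module structure, a compatible `k`-vector space structure, which is
finite-dimensional over `k`.
-/

universe u

variable {k A : Type u} [Field k] [Ring A] [Algebra k A]

lemma iSupIndep_map_of_injective {R M M' : Type*} [Ring R] [AddCommGroup M] [AddCommGroup M']
    [Module R M] [Module R M'] (f : M →ₗ[R] M') (hf : Function.Injective f)
    {ι : Sort*} {N : ι → Submodule R M} (h : iSupIndep N) :
    iSupIndep fun i => (N i).map f := by
  intro i
  have h1 := h i
  rw [disjoint_iff] at h1 ⊢
  simp_rw [← Submodule.map_iSup]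
  rw [← Submodule.map_inf f hf, h1, Submodule.map_bot]

lemma finrank_map_of_injective {k A : Type u} [Field k] [Ring A] [Algebra k A]
    {M M' : Type u} [AddCommGroup M] [AddCommGroup M'] [Module A M] [Module A M']
    [Module k M] [Module k M'] [IsScalarTower k A M] [IsScalarTower k A M']
    (f : M →ₗ[A] M') (hf : Function.Injective f) (X : Submodule A M) :
    Module.finrank k (X.map f) = Module.finrank k X :=
  (LinearEquiv.restrictScalars k (Submodule.equivMapOfInjective f hf X)).symm.finrank_eq


/-- if `𝓝` is hyperfinite and every module of `𝓜` has a submodule of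
codimension at most `L` isomorphic to a module of `𝓝`, then `𝓜` is hyperfinite. -/
theorem stmt_5 {k A : Type u} [Field k] [Ring A] [Algebra k A] [FiniteDimensional k A]
    (𝓜 𝓝 : Set (FdModule k A)) (h𝓝 : Hyperfinite 𝓝) (L : ℕ)
    (h : ∀ M ∈ 𝓜, ∃ P : Submodule A M.carrier,
      M.dim - Module.finrank k P ≤ L ∧
      ∃ N ∈ 𝓝, Nonempty (P ≃ₗ[A] N.carrier)) :
    Hyperfinite 𝓜 := by
  intro ε hε
  set ε' : ℝ := min ε 1 with hε'def
  have hε'pos : 0 < ε' := lt_min hε one_pos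
  have hε'1 : ε' ≤ 1 := min_le_right _ _
  have hε'ε : ε' ≤ ε := min_le_left _ _
  obtain ⟨L', hL'pos, hmainN⟩ := h𝓝 (ε' / 2) (by positivity)
  set D : ℕ := ⌈(2 * L : ℝ) / ε'⌉₊ with hDdef
  refine ⟨max L' (max D 1), lt_of_lt_of_le Nat.one_pos
    (le_trans (le_max_right D 1) (le_max_right L' _)), ?_⟩
  intro M hM
  by_cases hd : M.dim ≤ max L' (max D 1)
  · -- small case: take the whole module as a single summand
    have htop : Module.finrank k (⊤ : Submodule A M.carrier) = M.dim :=
      (LinearEquiv.restrictScalars k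
        (Submodule.topEquiv (R := A) (M := M.carrier))).finrank_eq
    refine ⟨⊤, ?_, 1, fun _ => ⊤, fun j => htop.le.trans hd, ?_, by simp⟩
    · rw [htop]
      nlinarith [Nat.cast_nonneg (α := ℝ) M.dim]
    · intro i
      have : (⨆ j, ⨆ (_ : j ≠ i), (⊤ : Submodule A M.carrier)) = ⊥ :=
        iSup_eq_bot.2 fun j => iSup_eq_bot.2 fun hj => absurd (Subsingleton.elim j i) hj
      exact this ▸ disjoint_bot_right
  · push_neg at hd
    obtain ⟨P, hPL, Nmod, hNmem, ⟨e⟩⟩ := h M hM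
    obtain ⟨Q, hQ, t, Ns, hNsL, hNsindep, hNssup⟩ := hmainN Nmod hNmem
    set f : Nmod.carrier →ₗ[A] M.carrier := P.subtype ∘ₗ (e.symm : Nmod.carrier ≃ₗ[A] P)
    have hf : Function.Injective f := P.injective_subtype.comp e.symm.injective
    refine ⟨Q.map f, ?_, t, fun j => (Ns j).map f,
      fun j => le_trans (by rw [finrank_map_of_injective f hf]; exact hNsL j)
        (le_max_left _ _),
      iSupIndep_map_of_injective f hf hNsindep,
      by rw [← Submodule.map_iSup, hNssup]⟩
    -- the dimension estimate
    have ep : Module.finrank k P = Nmod.dim :=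
      (LinearEquiv.restrictScalars k e).finrank_eq
    rw [finrank_map_of_injective f hf]
    have h1 : (M.dim : ℝ) ≤ L + Nmod.dim := by
      have := Nat.sub_le_iff_le_add.mp hPL
      rw [ep] at this
      exact_mod_cast this
    have h3 : 2 * (L : ℝ) ≤ ε' * M.dim := by
      have hD : (2 * L : ℝ) / ε' ≤ D := Nat.le_ceil _
      have hDd : (D : ℝ) ≤ M.dim := by
        have : D ≤ M.dim := le_trans (le_trans (le_max_left D 1) (le_max_right L' _)) hd.le
        exact_mod_cast this
      rw [div_le_iff₀ hε'pos] at hD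
      nlinarith [Nat.cast_nonneg (α := ℝ) M.dim]
    have h2 : (1 - ε' / 2) * (Nmod.dim : ℝ) ≤ Module.finrank k Q := hQ
    have hεd : (1 - ε) * (M.dim : ℝ) ≤ (1 - ε') * M.dim := by
      nlinarith [Nat.cast_nonneg (α := ℝ) M.dim]
    refine le_trans hεd ?_
    have hp0 : (0 : ℝ) ≤ Nmod.dim := Nat.cast_nonneg _
    have hq0 : (0 : ℝ) ≤ Module.finrank k Q := Nat.cast_nonneg _
    nlinarith [mul_nonneg (by linarith : (0:ℝ) ≤ (L : ℝ) + Nmod.dim - M.dim)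
      (by linarith : (0:ℝ) ≤ 2 - ε'), mul_nonneg hε'pos.le (Nat.cast_nonneg (α := ℝ) L)]
end

section
/- Let k be a field and A, B two finite-dimensional k-algebras. Let F be an additive, left-exact functor from the category of finite-dimensional A-modules to the category of finite-dimensional B-modules, and suppose there exist constants K₁, K₂ > 0 such that K₁·dim_k X ≤ dim_k F(X) ≤ K₂·dim_k X for all finite-dimensional A-modules X. If N is a hyperfinite set of finite-dimensional A-modules, then the set {F(X) : X ∈ N} of B-modules is also hyperfinite. -/
/-!
Hyperfiniteness for families of finite-dimensional modules over a
finite-dimensional algebra `A` over a field `k`, following Elek.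

A finite-dimensional `A`-module is bundled as a type together with an
`A`-module structure, a compatible `k`-vector space structure, which is
finite-dimensional over `k`.
-/

universe u

variable {k A : Type u} [Field k] [Ring A] [Algebra k A]

section Functors

variable (k A B : Type u) [Field k] [Ring A] [Algebra k A] [Ring B] [Algebra k B]

/-- An additive functor from finite-dimensional `A`-modules to finite-dimensional
`B`-modules. -/
structure FdFunctor where
  obj : FdModule k A → FdModule k B
  map : ∀ {M N : FdModule k A}, (M.carrier →ₗ[A] N.carrier) →
    ((obj M).carrier →ₗ[B] (obj N).carrier)
  map_id : ∀ M : FdModule k A, map (LinearMap.id (M := M.carrier)) = LinearMap.id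
  map_comp : ∀ {M N P : FdModule k A} (f : M.carrier →ₗ[A] N.carrier)
    (g : N.carrier →ₗ[A] P.carrier), map (g ∘ₗ f) = map g ∘ₗ map f
  map_add : ∀ {M N : FdModule k A} (f g : M.carrier →ₗ[A] N.carrier),
    map (f + g) = map f + map g

variable {k A B}

/-- A functor is left exact if it preserves kernels: it maps any exact sequence
`0 → X → Y → Z` to an exact sequence `0 → F X → F Y → F Z`. -/
def FdFunctor.LeftExact (F : FdFunctor k A B) : Prop :=
  ∀ {X Y Z : FdModule k A} (f : X.carrier →ₗ[A] Y.carrier) (g : Y.carrier →ₗ[A] Z.carrier),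
    Function.Injective f → LinearMap.range f = LinearMap.ker g →
    Function.Injective (F.map f) ∧ LinearMap.range (F.map f) = LinearMap.ker (F.map g)

end Functors


section Helpers

variable {k A : Type u} [Field k] [Ring A] [Algebra k A]

/-- A submodule of a finite-dimensional module, as a finite-dimensional module. -/
noncomputable def FdModule.sub (M : FdModule k A) (S : Submodule A M.carrier) :
    FdModule k A where
  carrier := S
  fd := FiniteDimensional.of_injective ((S.subtype).restrictScalars k) S.injective_subtype

/-- A quotient of a finite-dimensional module, as a finite-dimensional module. -/
noncomputable def FdModule.quot (M : FdModule k A) (S : Submodule A M.carrier) :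
    FdModule k A where
  carrier := M.carrier ⧸ S
  fd := Module.Finite.of_surjective ((S.mkQ).restrictScalars k) S.mkQ_surjective

section rk
set_option linter.unusedSectionVars false

variable {R : Type u} [Ring R] [Algebra k R]
variable {X Y : Type u} [AddCommGroup X] [Module R X] [Module k X] [IsScalarTower k R X]
  [AddCommGroup Y] [Module R Y] [Module k Y] [IsScalarTower k R Y]
  [FiniteDimensional k X] [FiniteDimensional k Y]

lemma rk_range_add_rk_ker (f : X →ₗ[R] Y) :
    Module.finrank k (LinearMap.range f) + Module.finrank k (LinearMap.ker f)
      = Module.finrank k X :=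
  LinearMap.finrank_range_add_finrank_ker (f.restrictScalars k)

lemma rk_range_le_dom (f : X →ₗ[R] Y) :
    Module.finrank k (LinearMap.range f) ≤ Module.finrank k X :=
  by have := rk_range_add_rk_ker (k := k) f; omega

lemma rk_range_le_cod (f : X →ₗ[R] Y) :
    Module.finrank k (LinearMap.range f) ≤ Module.finrank k Y :=
  Submodule.finrank_le ((LinearMap.range f).restrictScalars k)

end rk

open DirectSum in
/-- Projections attached to an internal direct sum decomposition. -/
lemma exists_projections {R M : Type u} [Ring R] [AddCommGroup M] [Module R M]
    {t : ℕ} (N : Fin t → Submodule R M) (hind : iSupIndep N) (hsup : ⨆ j, N j = ⊤) :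
    ∃ π : ∀ j, M →ₗ[R] N j,
      (∀ j, π j ∘ₗ (N j).subtype = LinearMap.id) ∧
      (∀ i j, i ≠ j → π i ∘ₗ (N j).subtype = 0) ∧
      (∑ j, (N j).subtype ∘ₗ π j) = LinearMap.id := by
  classical
  have hInt : DirectSum.IsInternal N :=
    (DirectSum.isInternal_submodule_iff_iSupIndep_and_iSup_eq_top N).2 ⟨hind, hsup⟩
  let e : (DirectSum (Fin t) fun j => N j) ≃ₗ[R] M := LinearEquiv.ofBijective (DirectSum.coeLinearMap N) hInt
  refine ⟨fun j => (DirectSum.component R (Fin t) (fun i => N i) j) ∘ₗ e.symm.toLinearMap,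
    ?_, ?_, ?_⟩
  · intro j
    ext x
    exact congrArg Subtype.val (hInt.ofBijective_coeLinearMap_same x)
  · intro i j hij
    ext x
    exact congrArg Subtype.val (hInt.ofBijective_coeLinearMap_of_ne hij.symm x)
  · ext y
    have key : ∀ z : DirectSum (Fin t) fun j => N j,
        ∑ j, ((N j).subtype (DirectSum.component R (Fin t) (fun i => N i) j z)) = e z := by
      intro z
      have : ∀ j, ((N j).subtype (DirectSum.component R (Fin t) (fun i => N i) j z))
          = e (DirectSum.of (fun j => N j) j (z j)) := by
        intro j
        simp [e, DirectSum.coeLinearMap_of]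
        exact (DirectSum.coeLinearMap_of N j (z j)).symm
      rw [Finset.sum_congr rfl fun j _ => this j, ← map_sum, DirectSum.sum_univ_of]
    have := key (e.symm y)
    rw [e.apply_symm_apply] at this
    simpa using this


lemma comap_subtype_indep_sup {R M : Type u} [Ring R] [AddCommGroup M] [Module R M]
    {t : ℕ} (P : Submodule R M) (N : Fin t → Submodule R M) (hNP : ∀ j, N j ≤ P)
    (hind : iSupIndep N) (hsup : ⨆ j, N j = P) :
    iSupIndep (fun j => (N j).comap P.subtype) ∧
      (⨆ j, (N j).comap P.subtype) = ⊤ := by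
  have hmap : ∀ j, Submodule.map P.subtype ((N j).comap P.subtype) = N j := by
    intro j
    rw [Submodule.map_comap_subtype, inf_eq_right.mpr (hNP j)]
  constructor
  · intro i
    rw [Submodule.disjoint_def]
    intro x hxi hxs
    have hx1 : (x : M) ∈ N i := hxi
    have hx2 : (x : M) ∈ ⨆ j, ⨆ _ : j ≠ i, N j := by
      have hm := Submodule.mem_map_of_mem (f := P.subtype) hxs
      rw [Submodule.map_iSup] at hm
      simp_rw [Submodule.map_iSup, hmap] at hm
      exact hm
    have hx0 : (x : M) = 0 := Submodule.disjoint_def.mp (hind i) _ hx1 hx2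
    exact Subtype.ext hx0
  · apply Submodule.map_injective_of_injective P.injective_subtype
    rw [Submodule.map_iSup]
    simp_rw [hmap, hsup]
    rw [Submodule.map_top, Submodule.range_subtype]

lemma FdModule.dim_eq (M : FdModule k A) : M.dim = Module.finrank k M.carrier := rfl

end Helpers

set_option maxHeartbeats 2000000 in
/-- an additive left-exact functor `F` with
`K₁ · dim X ≤ dim F(X) ≤ K₂ · dim X` maps hyperfinite families to hyperfinite families. -/
theorem stmt_6 {k A B : Type u} [Field k] [Ring A] [Algebra k A] [Ring B] [Algebra k B]
    [FiniteDimensional k A] [FiniteDimensional k B]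
    (F : FdFunctor k A B) (hle : F.LeftExact)
    (K₁ K₂ : ℝ) (hK₁ : 0 < K₁) (hK₂ : 0 < K₂)
    (hdim : ∀ X : FdModule k A,
      K₁ * (X.dim : ℝ) ≤ ((F.obj X).dim : ℝ) ∧ ((F.obj X).dim : ℝ) ≤ K₂ * (X.dim : ℝ))
    (𝓝 : Set (FdModule k A)) (h : Hyperfinite 𝓝) :
    Hyperfinite (F.obj '' 𝓝) := by
  classical
  intro ε hε
  have hε' : 0 < ε * K₁ / K₂ := by positivity
  obtain ⟨L', hL', hH⟩ := h (ε * K₁ / K₂) hε'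
  refine ⟨max 1 ⌈K₂ * (L' : ℝ)⌉₊, lt_of_lt_of_le one_pos (le_max_left _ _), ?_⟩
  rintro _ ⟨M, hM, rfl⟩
  obtain ⟨P, hP, t, N, hNL, hNind, hNsup⟩ := hH M hM
  have hNP : ∀ j, N j ≤ P := fun j => hNsup ▸ le_iSup N j
  obtain ⟨hcind, hcsup⟩ := comap_subtype_indep_sup P N hNP hNind hNsup
  obtain ⟨π, hπu, hπu0, hsum⟩ :=
    exists_projections (fun j => (N j).comap P.subtype) hcind hcsup
  set PM : FdModule k A := FdModule.sub M P with hPMdef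
  set QM : FdModule k A := FdModule.quot M P with hQMdef
  set Nj : Fin t → FdModule k A :=
    fun j => FdModule.sub PM ((N j).comap P.subtype) with hNjdef
  have Fzero : ∀ (X Y : FdModule k A), F.map (0 : X.carrier →ₗ[A] Y.carrier) = 0 := by
    intro X Y
    have h0 := F.map_add (0 : X.carrier →ₗ[A] Y.carrier) 0
    rw [add_zero] at h0
    exact left_eq_add.mp h0
  have Fsum : ∀ (X Y : FdModule k A) (f : Fin t → (X.carrier →ₗ[A] Y.carrier)),
      F.map (∑ j, f j) = ∑ j, F.map (f j) := fun X Y f =>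
    map_sum (AddMonoidHom.mk' (fun g : X.carrier →ₗ[A] Y.carrier => F.map g)
      (fun a b => F.map_add a b)) f Finset.univ
  obtain ⟨hinj, hker⟩ := hle (X := PM) (Y := M) (Z := QM) P.subtype P.mkQ
    P.injective_subtype (by erw [Submodule.range_subtype, Submodule.ker_mkQ])
  set Fι : (F.obj PM).carrier →ₗ[B] (F.obj M).carrier :=
    F.map (M := PM) (N := M) P.subtype with hFιdef
  set Fq : (F.obj M).carrier →ₗ[B] (F.obj QM).carrier :=
    F.map (M := M) (N := QM) P.mkQ with hFqdef
  set Fu : (j : Fin t) → ((F.obj (Nj j)).carrier →ₗ[B] (F.obj PM).carrier) :=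
    fun j => F.map (M := Nj j) (N := PM) ((N j).comap P.subtype).subtype with hFudef
  set Fπ : (j : Fin t) → ((F.obj PM).carrier →ₗ[B] (F.obj (Nj j)).carrier) :=
    fun j => F.map (M := PM) (N := Nj j) (π j) with hFπdef
  have hid : ∑ j, Fu j ∘ₗ Fπ j = LinearMap.id := by
    have e1 : F.map (M := PM) (N := PM)
        (∑ j, ((N j).comap P.subtype).subtype ∘ₗ π j)
        = ∑ j, F.map (M := PM) (N := PM) (((N j).comap P.subtype).subtype ∘ₗ π j) :=
      Fsum PM PM _
    have e2 : ∀ j, F.map (M := PM) (N := PM) (((N j).comap P.subtype).subtype ∘ₗ π j)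
        = Fu j ∘ₗ Fπ j :=
      fun j => F.map_comp (M := PM) (N := Nj j) (P := PM) (π j)
        ((N j).comap P.subtype).subtype
    calc ∑ j, Fu j ∘ₗ Fπ j
        = ∑ j, F.map (M := PM) (N := PM) (((N j).comap P.subtype).subtype ∘ₗ π j) :=
          Finset.sum_congr rfl fun j _ => (e2 j).symm
      _ = F.map (M := PM) (N := PM) (∑ j, ((N j).comap P.subtype).subtype ∘ₗ π j) :=
          e1.symm
      _ = F.map (M := PM) (N := PM) LinearMap.id := by erw [hsum]; rfl
      _ = LinearMap.id := F.map_id PM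
  refine ⟨LinearMap.range Fι, ?_, t, fun j => LinearMap.range (Fι ∘ₗ Fu j), ?_, ?_, ?_⟩
  · -- dimension bound
    have hrk : Module.finrank k (LinearMap.range Fι)
        = Module.finrank k (LinearMap.ker Fq) := by rw [hker]
    have hrn : Module.finrank k (LinearMap.range Fq) + Module.finrank k (LinearMap.ker Fq)
        = (F.obj M).dim := rk_range_add_rk_ker (k := k) Fq
    have hrle : Module.finrank k (LinearMap.range Fq) ≤ (F.obj QM).dim :=
      rk_range_le_cod (k := k) Fq
    have hqn : QM.dim + Module.finrank k P = M.dim :=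
      Submodule.finrank_quotient_add_finrank (P.restrictScalars k)
    have h1 : K₁ * (M.dim : ℝ) ≤ ((F.obj M).dim : ℝ) := (hdim M).1
    have h2 : ((F.obj QM).dim : ℝ) ≤ K₂ * (QM.dim : ℝ) := (hdim QM).2
    have hq' : (QM.dim : ℝ) + (Module.finrank k P : ℝ) = (M.dim : ℝ) := by
      exact_mod_cast hqn
    have hqd : (QM.dim : ℝ) ≤ (ε * K₁ / K₂) * (M.dim : ℝ) := by linarith [hP]
    have h5 : K₂ * (QM.dim : ℝ) ≤ ε * K₁ * (M.dim : ℝ) := by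
      have hm := mul_le_mul_of_nonneg_left hqd hK₂.le
      have : K₂ * ((ε * K₁ / K₂) * (M.dim : ℝ)) = ε * K₁ * (M.dim : ℝ) := by
        field_simp
      linarith
    have h6 : ε * K₁ * (M.dim : ℝ) ≤ ε * ((F.obj M).dim : ℝ) := by
      have := mul_le_mul_of_nonneg_left h1 hε.le
      linarith
    have hA : (Module.finrank k (LinearMap.range Fι) : ℝ)
        + (Module.finrank k (LinearMap.range Fq) : ℝ) = ((F.obj M).dim : ℝ) := by
      have hAn : Module.finrank k (LinearMap.range Fι) + Module.finrank k (LinearMap.range Fq)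
          = (F.obj M).dim := by rw [hrk]; omega
      exact_mod_cast hAn
    have hrle' : (Module.finrank k (LinearMap.range Fq) : ℝ) ≤ ((F.obj QM).dim : ℝ) := by
      exact_mod_cast hrle
    linarith
  · -- small pieces
    intro j
    have hb1 : Module.finrank k (LinearMap.range (Fι ∘ₗ Fu j)) ≤ (F.obj (Nj j)).dim :=
      rk_range_le_dom (k := k) (Fι ∘ₗ Fu j)
    have hb2 : ((F.obj (Nj j)).dim : ℝ) ≤ K₂ * ((Nj j).dim : ℝ) := (hdim (Nj j)).2
    have hb3 : (Nj j).dim = Module.finrank k (N j) :=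
      (((N j).comapSubtypeEquivOfLe (hNP j)).restrictScalars k).finrank_eq
    have hb4 : ((Nj j).dim : ℝ) ≤ (L' : ℝ) := by
      rw [hb3]; exact_mod_cast hNL j
    have hb5 : (Module.finrank k (LinearMap.range (Fι ∘ₗ Fu j)) : ℝ) ≤ K₂ * (L' : ℝ) :=
      calc (Module.finrank k (LinearMap.range (Fι ∘ₗ Fu j)) : ℝ)
          ≤ ((F.obj (Nj j)).dim : ℝ) := by exact_mod_cast hb1
        _ ≤ K₂ * ((Nj j).dim : ℝ) := hb2
        _ ≤ K₂ * (L' : ℝ) := mul_le_mul_of_nonneg_left hb4 hK₂.le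
    have hb6 : Module.finrank k (LinearMap.range (Fι ∘ₗ Fu j)) ≤ ⌈K₂ * (L' : ℝ)⌉₊ := by
      exact_mod_cast hb5.trans (Nat.le_ceil _)
    exact hb6.trans (le_max_right _ _)
  · -- independence
    intro i
    rw [Submodule.disjoint_def]
    intro x hxi hxs
    have hxi' : x ∈ Submodule.map Fι (LinearMap.range (Fu i)) := by
      rwa [← LinearMap.range_comp]
    have hxs' : x ∈ Submodule.map Fι (⨆ j, ⨆ _ : j ≠ i, LinearMap.range (Fu j)) := by
      rw [Submodule.map_iSup]
      simp_rw [Submodule.map_iSup, ← LinearMap.range_comp]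
      exact hxs
    obtain ⟨y, hyi, rfl⟩ := hxi'
    obtain ⟨y', hy', hyy⟩ := hxs'
    have hyy' : y' = y := hinj hyy
    subst hyy'
    have hc : Fπ i ∘ₗ Fu i = LinearMap.id := by
      have h1 := F.map_comp (M := Nj i) (N := PM) (P := Nj i)
        (((N i).comap P.subtype).subtype) (π i)
      erw [← h1, hπu i]
      exact F.map_id (Nj i)
    have key1 : (Fu i ∘ₗ Fπ i) y' = y' := by
      obtain ⟨z, rfl⟩ := hyi
      have hz := LinearMap.congr_fun hc z
      simp only [LinearMap.comp_apply, LinearMap.id_apply] at hz ⊢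
      rw [hz]
    have key2 : (⨆ j, ⨆ _ : j ≠ i, LinearMap.range (Fu j))
        ≤ LinearMap.ker (Fu i ∘ₗ Fπ i) := by
      refine iSup_le fun j => iSup_le fun hj => LinearMap.range_le_ker_iff.mpr ?_
      have h1 := F.map_comp (M := Nj j) (N := PM) (P := Nj i)
        (((N j).comap P.subtype).subtype) (π i)
      have h2 : (π i ∘ₗ ((N j).comap P.subtype).subtype) = 0 := hπu0 i j (Ne.symm hj)
      calc (Fu i ∘ₗ Fπ i) ∘ₗ Fu j = Fu i ∘ₗ (Fπ i ∘ₗ Fu j) := by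
            rw [LinearMap.comp_assoc]
        _ = Fu i ∘ₗ F.map (M := Nj j) (N := Nj i)
              (π i ∘ₗ ((N j).comap P.subtype).subtype) := by erw [h1]
        _ = Fu i ∘ₗ (0 : (F.obj (Nj j)).carrier →ₗ[B] (F.obj (Nj i)).carrier) := by
            erw [h2, Fzero (Nj j) (Nj i)]
        _ = 0 := LinearMap.comp_zero _
    have hy0 : y' = 0 := by
      have e1 : (Fu i ∘ₗ Fπ i) y' = 0 := key2 hy'
      rw [key1] at e1
      exact e1
    rw [hy0, map_zero]
  · -- the sup is the range of Fι
    apply le_antisymm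
    · exact iSup_le fun j => LinearMap.range_comp_le_range (Fu j) Fι
    · intro x hx
      obtain ⟨y, rfl⟩ := hx
      have hy : y = ∑ j, (Fu j) ((Fπ j) y) := by
        have hfy := LinearMap.congr_fun hid y
        simp only [LinearMap.sum_apply, LinearMap.comp_apply, LinearMap.id_apply] at hfy
        exact hfy.symm
      rw [hy, map_sum]
      exact Submodule.sum_mem _ fun j _ =>
        Submodule.mem_iSup_of_mem j ⟨(Fπ j) y, rfl⟩
end

section
/- Let k be a field and Q a finite acyclic quiver such that the category of finite-dimensional k-representations of Q is of amenable representation type. Let i ∈ Q₀ be a sink of Q (no arrow of Q starts at i), and let Q' = σ_i(Q) be the quiver obtained from Q by reversing all arrows starting or ending in i. Then the category of finite-dimensional k-representations of Q' is also of amenable representation type. -/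
/-!
Hyperfiniteness for families of finite-dimensional representations of finite quivers,
following Elek.
-/

universe u

/-- A finite quiver: finite sets of vertices and arrows, with source and target maps. -/
structure FinQuiver : Type 1 where
  vertex : Type
  arrow : Type
  [vertexFintype : Fintype vertex]
  [arrowFintype : Fintype arrow]
  src : arrow → vertex
  tgt : arrow → vertex

attribute [instance] FinQuiver.vertexFintype FinQuiver.arrowFintype

/-- A finite-dimensional `k`-representation of a finite quiver `Q`: a finite-dimensional
`k`-vector space at each vertex and a `k`-linear map along each arrow. -/
structure QuivRep (k : Type u) [Field k] (Q : FinQuiver) : Type (u+1) where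
  space : Q.vertex → Type u
  [acg : ∀ i, AddCommGroup (space i)]
  [mod : ∀ i, Module k (space i)]
  [fd : ∀ i, FiniteDimensional k (space i)]
  map : ∀ a : Q.arrow, space (Q.src a) →ₗ[k] space (Q.tgt a)

attribute [instance] QuivRep.acg QuivRep.mod QuivRep.fd

variable {k : Type u} [Field k] {Q : FinQuiver}

/-- The total dimension of a representation. -/
noncomputable def QuivRep.dim (M : QuivRep k Q) : ℕ :=
  ∑ i : Q.vertex, Module.finrank k (M.space i)

/-- A subrepresentation: a subspace at each vertex, compatible with all arrow maps. -/
structure SubRep (M : QuivRep k Q) : Type u where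
  toFun : ∀ i : Q.vertex, Submodule k (M.space i)
  compat : ∀ (a : Q.arrow) (x : M.space (Q.src a)),
    x ∈ toFun (Q.src a) → M.map a x ∈ toFun (Q.tgt a)

/-- The total dimension of a subrepresentation. -/
noncomputable def SubRep.dim {M : QuivRep k Q} (P : SubRep M) : ℕ :=
  ∑ i : Q.vertex, Module.finrank k (P.toFun i)

/-- A set `𝓜` of finite-dimensional representations of `Q` is *hyperfinite* if for every
`ε > 0` there is `L_ε > 0` such that every `M ∈ 𝓜` has a subrepresentation `P` with
`dim P ≥ (1 - ε) · dim M` which is isomorphic to a finite direct sum of representations of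
dimension at most `L_ε`; equivalently, `P` is the internal direct sum (vertexwise) of
finitely many subrepresentations `N j`, each of dimension at most `L_ε`. -/
def QuivRepHyperfinite (𝓜 : Set (QuivRep k Q)) : Prop :=
  ∀ ε : ℝ, 0 < ε → ∃ L : ℕ, 0 < L ∧
    ∀ M ∈ 𝓜, ∃ P : SubRep M,
      (1 - ε) * (M.dim : ℝ) ≤ (P.dim : ℝ) ∧
      ∃ (t : ℕ) (N : Fin t → SubRep M),
        (∀ j, (N j).dim ≤ L) ∧
        (∀ i : Q.vertex, iSupIndep fun j => (N j).toFun i) ∧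
        (∀ i : Q.vertex, (⨆ j, (N j).toFun i) = P.toFun i)

/-- The path algebra `kQ` is of amenable representation type if the family of all
finite-dimensional representations of `Q` is hyperfinite. -/
def QuivRepAmenable (k : Type u) [Field k] (Q : FinQuiver) : Prop :=
  QuivRepHyperfinite (Set.univ : Set (QuivRep k Q))

/-- A quiver is acyclic if it has no directed cycle. -/
def FinQuiver.Acyclic (Q : FinQuiver) : Prop :=
  ∀ (n : ℕ) (p : Fin (n + 1) → Q.arrow),
    (∀ m : Fin n, Q.tgt (p m.castSucc) = Q.src (p m.succ)) →
    Q.tgt (p (Fin.last n)) ≠ Q.src (p 0)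

/-- The reflection `σ_i(Q)` of `Q` at a vertex `i`: all arrows starting or ending in `i`
are reversed. -/
noncomputable def FinQuiver.reflect (Q : FinQuiver) (i : Q.vertex) : FinQuiver where
  vertex := Q.vertex
  arrow := Q.arrow
  src := fun a => by classical exact if Q.src a = i ∨ Q.tgt a = i then Q.tgt a else Q.src a
  tgt := fun a => by classical exact if Q.src a = i ∨ Q.tgt a = i then Q.src a else Q.tgt a

/-! ### Auxiliary machinery for the proof of Statement 8 -/

namespace Stmt8Aux

open Module Submodule

noncomputable instance reflAcg {k : Type u} [Field k] (Q : FinQuiver) (i : Q.vertex)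
    (M' : QuivRep k (Q.reflect i)) (j : Q.vertex) : AddCommGroup (M'.space j) := M'.acg j

noncomputable instance reflMod {k : Type u} [Field k] (Q : FinQuiver) (i : Q.vertex)
    (M' : QuivRep k (Q.reflect i)) (j : Q.vertex) : Module k (M'.space j) := M'.mod j

instance reflFd {k : Type u} [Field k] (Q : FinQuiver) (i : Q.vertex)
    (M' : QuivRep k (Q.reflect i)) (j : Q.vertex) : FiniteDimensional k (M'.space j) := M'.fd j

section SumCriterion

variable {k : Type u} [Field k] {V : Type u} [AddCommGroup V] [Module k V]
variable {ι : Type} [Fintype ι] [DecidableEq ι]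

/-- Finite sum-zero criterion for `iSupIndep`, forward direction. -/
lemma sumzero_of_iSupIndep {p : ι → Submodule k V} (hp : iSupIndep p)
    (g : ∀ l, p l) (hg : ∑ l, (g l : V) = 0) : ∀ l, (g l : V) = 0 := by
  intro l
  have hmem : (∑ m ∈ Finset.univ.erase l, (g m : V)) ∈ ⨆ m, ⨆ (_ : m ≠ l), p m := by
    refine Submodule.sum_mem _ fun m hm => ?_
    have hml : m ≠ l := (Finset.mem_erase.mp hm).1
    exact (le_iSup₂ (f := fun m (_ : m ≠ l) => p m) m hml) (g m).2
  have hadd : (g l : V) + ∑ m ∈ Finset.univ.erase l, (g m : V) = 0 := by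
    rw [Finset.add_sum_erase Finset.univ (fun m => (g m : V)) (Finset.mem_univ l), hg]
  have hsum : (g l : V) = -(∑ m ∈ Finset.univ.erase l, (g m : V)) :=
    eq_neg_of_add_eq_zero_left hadd
  have hlmem : (g l : V) ∈ p l ⊓ ⨆ m, ⨆ (_ : m ≠ l), p m :=
    ⟨(g l).2, by rw [hsum]; exact neg_mem hmem⟩
  simpa using (hp l).le_bot hlmem

/-- Decomposition of an element of a finite supremum. -/
lemma exists_decomp {p : ι → Submodule k V} {x : V} (hx : x ∈ ⨆ l, p l) :
    ∃ g : ∀ l, p l, ∑ l, (g l : V) = x := by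
  obtain ⟨f, hf, hsum⟩ := (Submodule.mem_iSup_iff_exists_finsupp p x).mp hx
  refine ⟨fun l => ⟨f l, hf l⟩, ?_⟩
  rw [← hsum, Finsupp.sum_fintype _ _ (fun m => rfl)]

/-- Finite sum-zero criterion for `iSupIndep`, reverse direction. -/
lemma iSupIndep_of_sumzero {p : ι → Submodule k V}
    (h : ∀ g : ∀ l, p l, ∑ l, (g l : V) = 0 → ∀ l, (g l : V) = 0) : iSupIndep p := by
  intro l
  rw [disjoint_iff, eq_bot_iff]
  rintro x ⟨hx1, hx2⟩
  rw [iSup_subtype'] at hx2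
  obtain ⟨g, hgsum⟩ := exists_decomp hx2
  classical
  set G : ∀ m, p m := fun m =>
    if hm : m = l then ⟨-x, by rw [hm] at *; exact neg_mem hx1⟩ else ⟨g ⟨m, hm⟩, (g ⟨m, hm⟩).2⟩
    with hG
  have h1 : (G l : V) = -x := by simp [hG]
  have hGsum : ∑ m, (G m : V) = 0 := by
    rw [← Finset.add_sum_erase Finset.univ (fun m => (G m : V)) (Finset.mem_univ l)]
    have h2 : ∑ m ∈ Finset.univ.erase l, (G m : V) = x := by
      rw [← hgsum, Finset.sum_subtype (p := fun m => m ≠ l) (Finset.univ.erase l)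
        (fun m => by simp) (fun m => (G m : V))]
      refine Finset.sum_congr rfl fun m _ => ?_
      simp only [hG, dif_neg m.2]
    rw [h1, h2, neg_add_cancel]
  have hzero := h G hGsum l
  rw [h1] at hzero
  rw [Submodule.mem_bot]
  exact neg_eq_zero.mp hzero

end SumCriterion

section Reflection

set_option linter.unusedSectionVars false

variable {k : Type u} [Field k]

/-- Transport along an equality of vertices. -/
noncomputable def rcast {Q : FinQuiver} (M : QuivRep k Q) {x y : Q.vertex} (h : x = y) :
    M.space x ≃ₗ[k] M.space y := h ▸ LinearEquiv.refl k (M.space x)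

lemma rcast_mem {Q : FinQuiver} (M : QuivRep k Q) (T : ∀ j, Submodule k (M.space j))
    {x y : Q.vertex} (h : x = y) (v : M.space x) : rcast M h v ∈ T y ↔ v ∈ T x := by
  subst h; exact Iff.rfl

variable (Q : FinQuiver) (i : Q.vertex)

lemma reflect_src_of_tgt (a : Q.arrow) (ha : Q.tgt a = i) : (Q.reflect i).src a = i := by
  simp only [FinQuiver.reflect]
  rw [if_pos (Or.inr ha)]; exact ha

lemma reflect_tgt_of_tgt (a : Q.arrow) (ha : Q.tgt a = i) : (Q.reflect i).tgt a = Q.src a := by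
  simp only [FinQuiver.reflect]
  rw [if_pos (Or.inr ha)]

lemma reflect_src_of_ne (a : Q.arrow) (hs : Q.src a ≠ i) (ha : Q.tgt a ≠ i) :
    (Q.reflect i).src a = Q.src a := by
  simp only [FinQuiver.reflect]
  rw [if_neg (by tauto)]

lemma reflect_tgt_of_ne (a : Q.arrow) (hs : Q.src a ≠ i) (ha : Q.tgt a ≠ i) :
    (Q.reflect i).tgt a = Q.tgt a := by
  simp only [FinQuiver.reflect]
  rw [if_neg (by tauto)]

noncomputable instance (Q : FinQuiver) : DecidableEq Q.vertex := Classical.decEq _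

/-- The arrows of `Q` ending at `i`. -/
def Arr : Type := {a : Q.arrow // Q.tgt a = i}

noncomputable instance : Fintype (Arr Q i) := by
  classical exact Subtype.fintype _

noncomputable instance : DecidableEq (Arr Q i) := Classical.decEq _

variable (M' : QuivRep k (Q.reflect i))

/-- The space at the reflection vertex. -/
abbrev Usp : Type u := M'.space i

/-- The space at the source of an arrow ending at `i`. -/
abbrev Wsp (a : Arr Q i) : Type u := M'.space (Q.src a.1)

/-- The product of the spaces at sources of arrows ending at `i`. -/
abbrev Ebig : Type u := ∀ a : Arr Q i, Wsp Q i M' a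

/-- The map `M'.map a` along a reversed arrow, recast as a map `U → W a`. -/
noncomputable def fmap (a : Arr Q i) : Usp Q i M' →ₗ[k] Wsp Q i M' a :=
  ((rcast M' (reflect_tgt_of_tgt Q i a.1 a.2)).toLinearMap.comp (M'.map a.1)).comp
    (rcast M' (reflect_src_of_tgt Q i a.1 a.2)).symm.toLinearMap

variable (hsink : ∀ a : Q.arrow, Q.src a ≠ i)

/-- The map `M'.map a` along an unreflected arrow. -/
noncomputable def gmap (a : Q.arrow) (ha : Q.tgt a ≠ i) :
    M'.space (Q.src a) →ₗ[k] M'.space (Q.tgt a) :=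
  ((rcast M' (reflect_tgt_of_ne Q i a (hsink a) ha)).toLinearMap.comp (M'.map a)).comp
    (rcast M' (reflect_src_of_ne Q i a (hsink a) ha)).symm.toLinearMap

/-- Master lemma producing subrepresentations of `M'` from `fmap`/`gmap` stability. -/
lemma compat_master (T : ∀ j : Q.vertex, Submodule k (M'.space j))
    (h1 : ∀ (a : Arr Q i) (u : Usp Q i M'), u ∈ T i → fmap Q i M' a u ∈ T (Q.src a.1))
    (h2 : ∀ (a : Q.arrow) (ha : Q.tgt a ≠ i) (u : M'.space (Q.src a)),
      u ∈ T (Q.src a) → gmap Q i M' hsink a ha u ∈ T (Q.tgt a)) :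
    ∀ (a : (Q.reflect i).arrow) (x : M'.space ((Q.reflect i).src a)),
      x ∈ T ((Q.reflect i).src a) → M'.map a x ∈ T ((Q.reflect i).tgt a) := by
  intro a x hx
  by_cases ha : Q.tgt a = i
  · have e1 := reflect_src_of_tgt Q i a ha
    have e2 := reflect_tgt_of_tgt Q i a ha
    have hu : rcast M' e1 x ∈ T i := (rcast_mem M' T e1 x).mpr hx
    have hf := h1 ⟨a, ha⟩ _ hu
    have heq : fmap Q i M' ⟨a, ha⟩ (rcast M' e1 x) = rcast M' e2 (M'.map a x) := by
      simp [fmap]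
    rw [heq] at hf
    exact (rcast_mem M' T e2 _).mp hf
  · have e1 := reflect_src_of_ne Q i a (hsink a) ha
    have e2 := reflect_tgt_of_ne Q i a (hsink a) ha
    have hu : rcast M' e1 x ∈ T (Q.src a) := (rcast_mem M' T e1 x).mpr hx
    have hf := h2 a ha _ hu
    have heq : gmap Q i M' hsink a ha (rcast M' e1 x) = rcast M' e2 (M'.map a x) := by
      simp [gmap]
    rw [heq] at hf
    exact (rcast_mem M' T e2 _).mp hf

end Reflection
section Construction

set_option linter.unusedSectionVars false
set_option maxHeartbeats 1000000

open Module Submodule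

variable {k : Type u} [Field k]
variable (Q : FinQuiver) (i : Q.vertex) (M' : QuivRep k (Q.reflect i))

/-- The assembled map `φ : U → E`. -/
noncomputable def phi : Usp Q i M' →ₗ[k] Ebig Q i M' :=
  LinearMap.pi (fun a => fmap Q i M' a)

/-- Range of `φ`. -/
noncomputable def Rng : Submodule k (Ebig Q i M') := LinearMap.range (phi Q i M')

/-- Kernel of `φ`. -/
noncomputable def Kker : Submodule k (Usp Q i M') := LinearMap.ker (phi Q i M')

/-- A complement of the range of `φ` in `E`. -/
noncomputable def Ccomp : Submodule k (Ebig Q i M') :=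
  (Rng Q i M').exists_isCompl.choose

lemma isCompl_Ccomp : IsCompl (Rng Q i M') (Ccomp Q i M') :=
  (Rng Q i M').exists_isCompl.choose_spec

/-- A complement of the kernel of `φ` in `U`. -/
noncomputable def U0 : Submodule k (Usp Q i M') :=
  (Kker Q i M').exists_isCompl.choose

lemma isCompl_U0 : IsCompl (Kker Q i M') (U0 Q i M') :=
  (Kker Q i M').exists_isCompl.choose_spec

/-- Projection of `E` onto the complement of the range of `φ`. -/
noncomputable def prE : Ebig Q i M' →ₗ[k] Ebig Q i M' :=
  (Ccomp Q i M').subtype.comp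
    (Submodule.linearProjOfIsCompl (Ccomp Q i M') (Rng Q i M') (isCompl_Ccomp Q i M').symm)

lemma prE_mem_Ccomp (x : Ebig Q i M') : prE Q i M' x ∈ Ccomp Q i M' := by
  simp [prE]

lemma prE_eq_zero_iff (x : Ebig Q i M') : prE Q i M' x = 0 ↔ x ∈ Rng Q i M' := by
  rw [prE]
  simp only [LinearMap.comp_apply, Submodule.coe_subtype, Submodule.coe_eq_zero]
  exact Submodule.linearProjOfIsCompl_apply_eq_zero_iff _

open scoped Classical in
/-- The submodule of `M'.space j × E` carrying the reflected representation. -/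
noncomputable def Sj (j : Q.vertex) : Submodule k (M'.space j × Ebig Q i M') :=
  if j = i then (⊥ : Submodule k (M'.space j)).prod (Ccomp Q i M')
  else (⊤ : Submodule k (M'.space j)).prod ⊥

lemma Sj_of_ne {j : Q.vertex} (hj : j ≠ i) : Sj Q i M' j = Submodule.prod ⊤ ⊥ := by
  simp only [Sj]; rw [if_neg hj]

lemma Sj_of_eq {j : Q.vertex} (hj : j = i) :
    Sj Q i M' j = Submodule.prod ⊥ (Ccomp Q i M') := by
  simp only [Sj]; rw [if_pos hj]

variable (hsink : ∀ a : Q.arrow, Q.src a ≠ i)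

/-- Ambient version of the arrow maps of the reflected representation `bigM`. -/
noncomputable def beta (a : Q.arrow) :
    (M'.space (Q.src a) × Ebig Q i M') →ₗ[k] (M'.space (Q.tgt a) × Ebig Q i M') :=
  letI := Classical.propDecidable (Q.tgt a = i)
  if ha : Q.tgt a = i then
    LinearMap.prod 0 ((prE Q i M').comp
      ((LinearMap.single k (fun a' : Arr Q i => Wsp Q i M' a') ⟨a, ha⟩).comp
        (LinearMap.fst k _ _)))
  else
    LinearMap.prod ((gmap Q i M' hsink a ha).comp (LinearMap.fst k _ _)) 0

lemma beta_mem (a : Q.arrow) :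
    ∀ x ∈ Sj Q i M' (Q.src a), beta Q i M' hsink a x ∈ Sj Q i M' (Q.tgt a) := by
  classical
  intro x _
  by_cases ha : Q.tgt a = i
  · rw [Sj_of_eq Q i M' ha]
    simp only [beta]
    rw [dif_pos ha]
    exact ⟨Submodule.zero_mem _, prE_mem_Ccomp Q i M' _⟩
  · rw [Sj_of_ne Q i M' ha]
    simp only [beta]
    rw [dif_neg ha]
    exact ⟨trivial, rfl⟩

/-- The representation of `Q` built out of `M'`. -/
noncomputable def bigM : QuivRep k Q where
  space j := ↥(Sj Q i M' j)
  acg j := (Sj Q i M' j).addCommGroup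
  mod j := (Sj Q i M' j).module
  fd j := inferInstance
  map a := LinearMap.restrict (beta Q i M' hsink a) (beta_mem Q i M' hsink a)

end Construction
section Transfer

set_option linter.unusedSectionVars false
set_option maxHeartbeats 1000000

open Module Submodule

variable {k : Type u} [Field k]
variable (Q : FinQuiver) (i : Q.vertex) (M' : QuivRep k (Q.reflect i))

/-- First-coordinate extraction from the carrier submodule. -/
noncomputable def fstS (j : Q.vertex) : ↥(Sj Q i M' j) →ₗ[k] M'.space j :=
  (LinearMap.fst k (M'.space j) (Ebig Q i M')).comp (Sj Q i M' j).subtype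

/-- Second-coordinate extraction from the carrier submodule. -/
noncomputable def sndS (j : Q.vertex) : ↥(Sj Q i M' j) →ₗ[k] Ebig Q i M' :=
  (LinearMap.snd k (M'.space j) (Ebig Q i M')).comp (Sj Q i M' j).subtype

lemma fstS_injective {j : Q.vertex} (hj : j ≠ i) : Function.Injective (fstS Q i M' j) := by
  intro v w h
  have hv : (v : M'.space j × Ebig Q i M') ∈ (⊤ : Submodule k (M'.space j)).prod ⊥ :=
    Sj_of_ne Q i M' hj ▸ v.2
  have hw : (w : M'.space j × Ebig Q i M') ∈ (⊤ : Submodule k (M'.space j)).prod ⊥ :=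
    Sj_of_ne Q i M' hj ▸ w.2
  apply Subtype.ext
  apply Prod.ext h
  exact ((Submodule.mem_bot k).mp hv.2).trans ((Submodule.mem_bot k).mp hw.2).symm

lemma sndS_injective_i : Function.Injective (sndS Q i M' i) := by
  intro v w h
  have hv : (v : Usp Q i M' × Ebig Q i M') ∈ (⊥ : Submodule k (Usp Q i M')).prod (Ccomp Q i M') :=
    Sj_of_eq Q i M' rfl ▸ v.2
  have hw : (w : Usp Q i M' × Ebig Q i M') ∈ (⊥ : Submodule k (Usp Q i M')).prod (Ccomp Q i M') :=
    Sj_of_eq Q i M' rfl ▸ w.2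
  apply Subtype.ext
  apply Prod.ext _ h
  exact ((Submodule.mem_bot k).mp hv.1).trans ((Submodule.mem_bot k).mp hw.1).symm

/-- The content of a family of submodules of `bigM` at a vertex. -/
noncomputable def C1 (T : ∀ j : Q.vertex, Submodule k ↥(Sj Q i M' j)) (j : Q.vertex) :
    Submodule k (M'.space j) := Submodule.map (fstS Q i M' j) (T j)

/-- The box submodule of `E` determined by the contents at sources. -/
noncomputable def Ybox (T : ∀ j : Q.vertex, Submodule k ↥(Sj Q i M' j)) :
    Submodule k (Ebig Q i M') :=
  ⨅ a : Arr Q i, Submodule.comap (LinearMap.proj a) (C1 Q i M' T (Q.src a.1))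

lemma mem_Ybox {T} {x : Ebig Q i M'} :
    x ∈ Ybox Q i M' T ↔ ∀ a : Arr Q i, x a ∈ C1 Q i M' T (Q.src a.1) := by
  simp [Ybox, Submodule.mem_iInf]

/-- The content at the reflection vertex: preimage of the box under `φ`. -/
noncomputable def PiP (T : ∀ j : Q.vertex, Submodule k ↥(Sj Q i M' j)) :
    Submodule k (Usp Q i M') := Submodule.comap (phi Q i M') (Ybox Q i M' T)

/-- Image of the content at `i` inside `E`. -/
noncomputable def Dimg (T : ∀ j : Q.vertex, Submodule k ↥(Sj Q i M' j)) :
    Submodule k (Ebig Q i M') := Submodule.map (sndS Q i M' i) (T i)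

open scoped Classical in
/-- Placing a given submodule at vertex `i` over a base family. -/
noncomputable def place (x : Submodule k (Usp Q i M'))
    (base : ∀ j : Q.vertex, Submodule k (M'.space j)) :
    ∀ j : Q.vertex, Submodule k (M'.space j) := fun j =>
  if hj : j = i then hj.symm ▸ x else base j

lemma place_eq (x : Submodule k (Usp Q i M')) (base) : place Q i M' x base i = x := by
  simp [place]

lemma place_ne (x : Submodule k (Usp Q i M')) (base) {j : Q.vertex} (hj : j ≠ i) :
    place Q i M' x base j = base j := by
  simp only [place]; rw [dif_neg hj]

variable (hsink : ∀ a : Q.arrow, Q.src a ≠ i)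

lemma fmap_phi (u : Usp Q i M') (a : Arr Q i) : phi Q i M' u a = fmap Q i M' a u := rfl

/-- Compatibility of contents along unreflected arrows. -/
lemma C1_gmap (P : SubRep (bigM Q i M' hsink)) (a : Q.arrow) (ha : Q.tgt a ≠ i)
    (u : M'.space (Q.src a)) (hu : u ∈ C1 Q i M' P.toFun (Q.src a)) :
    gmap Q i M' hsink a ha u ∈ C1 Q i M' P.toFun (Q.tgt a) := by
  obtain ⟨v, hv, rfl⟩ := hu
  refine ⟨(bigM Q i M' hsink).map a v, P.compat a v hv, ?_⟩
  show (fstS Q i M' (Q.tgt a)) (LinearMap.restrict _ (beta_mem Q i M' hsink a) v) = _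
  simp only [fstS, LinearMap.comp_apply, Submodule.coe_subtype, LinearMap.restrict_coe_apply]
  simp only [beta]
  rw [dif_neg ha]
  rfl

lemma sndS_map_congr (P : SubRep (bigM Q i M' hsink)) {x y : Q.vertex} (h : x = y) :
    Submodule.map (sndS Q i M' x) (P.toFun x) = Submodule.map (sndS Q i M' y) (P.toFun y) := by
  subst h; rfl

/-- Compatibility of contents along reflected arrows: the image of a single lands in `Dimg`. -/
lemma single_prE_mem (P : SubRep (bigM Q i M' hsink)) (a : Arr Q i)
    (u : Wsp Q i M' a) (hu : u ∈ C1 Q i M' P.toFun (Q.src a.1)) :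
    prE Q i M' (Pi.single a u) ∈ Dimg Q i M' P.toFun := by
  classical
  obtain ⟨v, hv, rfl⟩ := hu
  have hw := P.compat a.1 v hv
  have key : (sndS Q i M' (Q.tgt a.1)) ((bigM Q i M' hsink).map a.1 v)
      = prE Q i M' (Pi.single a (fstS Q i M' (Q.src a.1) v)) := by
    show (sndS Q i M' (Q.tgt a.1)) (LinearMap.restrict _ (beta_mem Q i M' hsink a.1) v) = _
    simp only [sndS, fstS, LinearMap.comp_apply, Submodule.coe_subtype,
      LinearMap.restrict_coe_apply]
    simp only [beta]
    rw [dif_pos a.2]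
    rfl
  have hmem : prE Q i M' (Pi.single a (fstS Q i M' (Q.src a.1) v))
      ∈ Submodule.map (sndS Q i M' (Q.tgt a.1)) (P.toFun (Q.tgt a.1)) := by
    rw [← key]; exact ⟨_, hw, rfl⟩
  have hDeq : Submodule.map (sndS Q i M' (Q.tgt a.1)) (P.toFun (Q.tgt a.1))
      = Dimg Q i M' P.toFun := by
    exact sndS_map_congr Q i M' hsink P a.2
  rwa [hDeq] at hmem

/-- The transferred subrepresentation of `M'` built from a subrepresentation of `bigM`. -/
noncomputable def transSub (P : SubRep (bigM Q i M' hsink)) : SubRep M' where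
  toFun := place Q i M' (PiP Q i M' P.toFun) (C1 Q i M' P.toFun)
  compat := by
    refine compat_master Q i M' hsink _ ?_ ?_
    · intro a u hu
      rw [place_eq] at hu
      rw [place_ne Q i M' _ _ (hsink a.1)]
      have := (mem_Ybox Q i M').mp hu a
      rwa [fmap_phi] at this
    · intro a ha u hu
      rw [place_ne Q i M' _ _ (hsink a)] at hu
      rw [place_ne Q i M' _ _ ha]
      exact C1_gmap Q i M' hsink P a ha u hu

/-- The transferred small pieces. -/
noncomputable def transPiece (P : SubRep (bigM Q i M' hsink)) : SubRep M' where
  toFun := place Q i M' (U0 Q i M' ⊓ PiP Q i M' P.toFun) (C1 Q i M' P.toFun)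
  compat := by
    refine compat_master Q i M' hsink _ ?_ ?_
    · intro a u hu
      rw [place_eq] at hu
      rw [place_ne Q i M' _ _ (hsink a.1)]
      have := (mem_Ybox Q i M').mp hu.2 a
      rwa [fmap_phi] at this
    · intro a ha u hu
      rw [place_ne Q i M' _ _ (hsink a)] at hu
      rw [place_ne Q i M' _ _ ha]
      exact C1_gmap Q i M' hsink P a ha u hu

/-- One-dimensional pieces inside the kernel of `φ`. -/
noncomputable def linePiece (v : Usp Q i M') (hv : v ∈ Kker Q i M') : SubRep M' where
  toFun := place Q i M' (Submodule.span k {v}) (fun _ => ⊥)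
  compat := by
    refine compat_master Q i M' hsink _ ?_ ?_
    · intro a u hu
      rw [place_eq] at hu
      rw [place_ne Q i M' _ _ (hsink a.1)]
      have hker : u ∈ Kker Q i M' := by
        refine Submodule.span_le.mpr ?_ hu
        simpa using hv
      have : phi Q i M' u = 0 := hker
      rw [← fmap_phi, this]
      simp
    · intro a ha u hu
      rw [place_ne Q i M' _ _ (hsink a)] at hu
      rw [place_ne Q i M' _ _ ha]
      simp only [Submodule.mem_bot] at hu ⊢
      rw [hu]
      simp

end Transfer
section KeyLemmas

set_option linter.unusedSectionVars false
set_option maxHeartbeats 1000000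

open Module Submodule

variable {k : Type u} [Field k]
variable (Q : FinQuiver) (i : Q.vertex) (M' : QuivRep k (Q.reflect i))
variable (hsink : ∀ a : Q.arrow, Q.src a ≠ i)
variable {t : ℕ} (P : SubRep (bigM Q i M' hsink)) (N : Fin t → SubRep (bigM Q i M' hsink))
variable (hindep : ∀ j : Q.vertex, iSupIndep fun l => (N l).toFun j)
variable (hsupN : ∀ j : Q.vertex, (⨆ l, (N l).toFun j) = P.toFun j)

include hsupN in
lemma hNle (l : Fin t) (j : Q.vertex) : (N l).toFun j ≤ P.toFun j := by
  rw [← hsupN j]; exact le_iSup (fun l => (N l).toFun j) l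

include hsupN in
lemma C1_mono (l : Fin t) (j : Q.vertex) :
    C1 Q i M' (N l).toFun j ≤ C1 Q i M' P.toFun j :=
  Submodule.map_mono (hNle Q i M' hsink P N hsupN l j)

include hsupN in
lemma Ybox_mono (l : Fin t) : Ybox Q i M' (N l).toFun ≤ Ybox Q i M' P.toFun :=
  iInf_mono fun a => Submodule.comap_mono (C1_mono Q i M' hsink P N hsupN l (Q.src a.1))

include hsupN in
lemma C1_sup (j : Q.vertex) :
    (⨆ l, C1 Q i M' (N l).toFun j) = C1 Q i M' P.toFun j := by
  simp only [C1]
  rw [← hsupN j]; exact (Submodule.map_iSup _ _).symm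

include hindep in
lemma C1_indep {j : Q.vertex} (hj : j ≠ i) :
    iSupIndep fun l => C1 Q i M' (N l).toFun j := by
  classical
  apply iSupIndep_of_sumzero
  intro g hg l
  have hch : ∀ l, ∃ v : ↥((N l).toFun j), fstS Q i M' j (v : (bigM Q i M' hsink).space j)
      = (g l : M'.space j) := by
    intro l
    obtain ⟨v, hv, hveq⟩ := (g l).2
    exact ⟨⟨v, hv⟩, hveq⟩
  choose v hv using hch
  have hz : (∑ m, ((v m : (bigM Q i M' hsink).space j))) = 0 := by
    apply fstS_injective Q i M' hj
    erw [map_sum, map_zero]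
    simp_rw [hv]
    exact hg
  have := sumzero_of_iSupIndep (hindep j) v hz l
  rw [← hv l, show ((v l : (bigM Q i M' hsink).space j)) = 0 from this]; erw [map_zero]

include hindep in
lemma Dimg_indep : iSupIndep fun l => Dimg Q i M' (N l).toFun := by
  classical
  apply iSupIndep_of_sumzero
  intro g hg l
  have hch : ∀ l, ∃ v : ↥((N l).toFun i), sndS Q i M' i (v : (bigM Q i M' hsink).space i)
      = (g l : Ebig Q i M') := by
    intro l
    obtain ⟨v, hv, hveq⟩ := (g l).2
    exact ⟨⟨v, hv⟩, hveq⟩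
  choose v hv using hch
  have hz : (∑ m, ((v m : (bigM Q i M' hsink).space i))) = 0 := by
    apply sndS_injective_i Q i M'
    erw [map_sum, map_zero]
    simp_rw [hv]
    exact hg
  have := sumzero_of_iSupIndep (hindep i) v hz l
  rw [← hv l, show ((v l : (bigM Q i M' hsink).space i)) = 0 from this]; erw [map_zero]

include hindep in
lemma Ybox_indep : iSupIndep fun l => Ybox Q i M' (N l).toFun := by
  classical
  apply iSupIndep_of_sumzero
  intro g hg l
  have hcoord : ∀ a : Arr Q i, ((g l : Ebig Q i M')) a = 0 := by
    intro a
    have hga : ∀ m, ((g m : Ebig Q i M')) a ∈ C1 Q i M' (N m).toFun (Q.src a.1) :=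
      fun m => (mem_Ybox Q i M').mp (g m).2 a
    have hsz : ∑ m, ((g m : Ebig Q i M')) a = 0 := by
      rw [← Finset.sum_apply _ _ (fun m => ((g m : Ebig Q i M')))]
      rw [hg]
      rfl
    exact sumzero_of_iSupIndep (C1_indep Q i M' hsink N hindep (hsink a.1))
      (fun m => ⟨_, hga m⟩) hsz l
  funext a
  exact hcoord a

include hindep hsupN in
/-- The key exactness: the part of the box over `P` lying in the range of `φ` is covered by
the boxes over the pieces. -/
lemma key_exactness :
    Ybox Q i M' P.toFun ⊓ Rng Q i M' ≤ ⨆ l, (Ybox Q i M' (N l).toFun ⊓ Rng Q i M') := by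
  classical
  rintro x ⟨hxY, hxR⟩
  have hdec : ∀ a : Arr Q i, ∃ g : ∀ l, ↥(C1 Q i M' (N l).toFun (Q.src a.1)),
      ∑ l, (g l : M'.space (Q.src a.1)) = x a := by
    intro a
    apply exists_decomp
    rw [C1_sup Q i M' hsink P N hsupN (Q.src a.1)]
    exact (mem_Ybox Q i M').mp hxY a
  choose G hG using hdec
  set xl : Fin t → Ebig Q i M' := fun l => fun a => (G a l : M'.space (Q.src a.1)) with hxl
  have hsumx : ∑ l, xl l = x := by
    funext a
    rw [Finset.sum_apply]
    exact hG a
  have hxlY : ∀ l, xl l ∈ Ybox Q i M' (N l).toFun := by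
    intro l
    refine (mem_Ybox Q i M').mpr ?_
    intro a
    exact (G a l).2
  have hxlD : ∀ l, prE Q i M' (xl l) ∈ Dimg Q i M' (N l).toFun := by
    intro l
    have hxle : xl l = ∑ a, Pi.single a (xl l a) := by
      rw [Finset.univ_sum_single (xl l)]
    rw [hxle, map_sum]
    refine Submodule.sum_mem _ fun a _ => ?_
    exact single_prE_mem Q i M' hsink (N l) a _ (G a l).2
  have hprEzero : ∑ l, prE Q i M' (xl l) = 0 := by
    rw [← map_sum, hsumx]
    exact (prE_eq_zero_iff Q i M' x).mpr hxR
  have hxlR : ∀ l, xl l ∈ Rng Q i M' := by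
    intro l
    rw [← prE_eq_zero_iff Q i M']
    exact sumzero_of_iSupIndep (Dimg_indep Q i M' hsink N hindep)
      (fun m => ⟨_, hxlD m⟩) hprEzero l
  rw [← hsumx]
  refine Submodule.sum_mem _ fun l _ => ?_
  exact le_iSup (fun l => Ybox Q i M' (N l).toFun ⊓ Rng Q i M') l ⟨hxlY l, hxlR l⟩

lemma Kker_le_PiP : Kker Q i M' ≤ PiP Q i M' P.toFun := by
  intro u hu
  have : phi Q i M' u = 0 := hu
  show phi Q i M' u ∈ Ybox Q i M' P.toFun; rw [this]
  exact Submodule.zero_mem _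

include hindep hsupN in
/-- Supremum identity at the reflection vertex. -/
lemma sup_at_i :
    ((⨆ l, (U0 Q i M' ⊓ PiP Q i M' (N l).toFun)) ⊔ Kker Q i M') = PiP Q i M' P.toFun := by
  apply le_antisymm
  · apply sup_le
    · apply iSup_le
      intro l
      refine le_trans inf_le_right ?_
      exact Submodule.comap_mono (Ybox_mono Q i M' hsink P N hsupN l)
    · exact Kker_le_PiP Q i M' hsink P
  · intro u hu
    have hsup : Kker Q i M' ⊔ U0 Q i M' = ⊤ := (isCompl_U0 Q i M').sup_eq_top
    obtain ⟨κ, hκ, u0, hu0, hκu⟩ := Submodule.mem_sup.mp (hsup ▸ Submodule.mem_top :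
      u ∈ Kker Q i M' ⊔ U0 Q i M')
    have hφκ : phi Q i M' κ = 0 := hκ
    have hφu0 : phi Q i M' u0 = phi Q i M' u := by
      rw [← hκu, map_add, hφκ, zero_add]
    have hmem : phi Q i M' u0 ∈ Ybox Q i M' P.toFun ⊓ Rng Q i M' :=
      ⟨by rw [hφu0]; exact hu, LinearMap.mem_range_self _ u0⟩
    have hx := key_exactness Q i M' hsink P N hindep hsupN hmem
    obtain ⟨g, hgsum⟩ := exists_decomp hx
    have hch : ∀ l, ∃ w : Usp Q i M', w ∈ U0 Q i M' ∧ phi Q i M' w = (g l : Ebig Q i M') := by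
      intro l
      obtain ⟨w', hw'⟩ := (g l).2.2
      obtain ⟨κ', hκ', w0, hw0, hκw⟩ := Submodule.mem_sup.mp (hsup ▸ Submodule.mem_top :
        w' ∈ Kker Q i M' ⊔ U0 Q i M')
      refine ⟨w0, hw0, ?_⟩
      have hφκ' : phi Q i M' κ' = 0 := hκ'
      rw [← hw', ← hκw, map_add, hφκ', zero_add]
    choose w hw1 hw2 using hch
    have hdiff : u0 - ∑ l, w l = 0 := by
      have hker : u0 - ∑ l, w l ∈ Kker Q i M' := by
        show phi Q i M' _ = 0
        rw [map_sub, map_sum]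
        simp_rw [hw2]
        rw [hgsum, hφu0]
        rw [← hφu0, sub_self]
      have hU0m : u0 - ∑ l, w l ∈ U0 Q i M' :=
        Submodule.sub_mem _ hu0 (Submodule.sum_mem _ fun l _ => hw1 l)
      have hbot := (isCompl_U0 Q i M').disjoint
      exact (Submodule.mem_bot k).mp (hbot.le_bot ⟨hker, hU0m⟩)
    have hu0sum : u0 = ∑ l, w l := by
      have := sub_eq_zero.mp hdiff; exact this
    rw [← hκu, hu0sum]
    apply Submodule.add_mem
    · exact Submodule.mem_sup_right hκ
    · refine Submodule.mem_sup_left (Submodule.sum_mem _ fun l _ => ?_)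
      refine le_iSup (fun l => U0 Q i M' ⊓ PiP Q i M' (N l).toFun) l ⟨hw1 l, ?_⟩
      refine Submodule.mem_comap.mpr ?_
      rw [hw2 l]
      exact (g l).2.1

end KeyLemmas
section Dimensions

set_option linter.unusedSectionVars false
set_option maxHeartbeats 1000000

open Module Submodule

variable {k : Type u} [Field k]
variable (Q : FinQuiver) (i : Q.vertex) (M' : QuivRep k (Q.reflect i))

lemma finrank_Sj_ne {j : Q.vertex} (hj : j ≠ i) :
    finrank k ↥(Sj Q i M' j) = finrank k (M'.space j) := by
  have hbij : Function.Bijective (fstS Q i M' j) := by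
    refine ⟨fstS_injective Q i M' hj, fun x => ?_⟩
    refine ⟨⟨(x, 0), ?_⟩, rfl⟩
    rw [Sj_of_ne Q i M' hj]
    exact ⟨trivial, rfl⟩
  exact (LinearEquiv.ofBijective _ hbij).finrank_eq

lemma finrank_Sj_i : finrank k ↥(Sj Q i M' i) = finrank k ↥(Ccomp Q i M') := by
  have hmem : ∀ v : ↥(Sj Q i M' i), sndS Q i M' i v ∈ Ccomp Q i M' := by
    intro v
    have hv : (v : Usp Q i M' × Ebig Q i M') ∈ (⊥ : Submodule k (Usp Q i M')).prod
        (Ccomp Q i M') := Sj_of_eq Q i M' rfl ▸ v.2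
    exact hv.2
  have hbij : Function.Bijective (LinearMap.codRestrict (Ccomp Q i M') (sndS Q i M' i) hmem) := by
    constructor
    · intro v w h
      exact sndS_injective_i Q i M' (congrArg Subtype.val h)
    · intro c
      refine ⟨⟨((0 : Usp Q i M'), (c : Ebig Q i M')), ?_⟩, ?_⟩
      · rw [Sj_of_eq Q i M' rfl]
        exact ⟨Submodule.zero_mem _, c.2⟩
      · exact Subtype.ext rfl
  exact (LinearEquiv.ofBijective _ hbij).finrank_eq

lemma finrank_C1 (T : ∀ j : Q.vertex, Submodule k ↥(Sj Q i M' j)) {j : Q.vertex} (hj : j ≠ i) :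
    finrank k ↥(C1 Q i M' T j) = finrank k ↥(T j) :=
  ((Submodule.equivMapOfInjective _ (fstS_injective Q i M' hj) (T j)).finrank_eq).symm

lemma finrank_Ebig : finrank k (Ebig Q i M') = ∑ a : Arr Q i, finrank k (Wsp Q i M' a) :=
  Module.finrank_pi_fintype k

lemma finrank_Rng_Ccomp :
    finrank k ↥(Rng Q i M') + finrank k ↥(Ccomp Q i M') = finrank k (Ebig Q i M') :=
  Submodule.finrank_add_eq_of_isCompl (isCompl_Ccomp Q i M')

lemma finrank_U_split :
    finrank k ↥(Rng Q i M') + finrank k ↥(Kker Q i M') = finrank k (Usp Q i M') :=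
  LinearMap.finrank_range_add_finrank_ker (phi Q i M')

lemma Kker_le_PiP' (T : ∀ j : Q.vertex, Submodule k ↥(Sj Q i M' j)) :
    Kker Q i M' ≤ PiP Q i M' T := by
  intro u hu
  have h0 : phi Q i M' u = 0 := hu
  rw [PiP, Submodule.mem_comap, h0]
  exact Submodule.zero_mem _

lemma finrank_PiP (T : ∀ j : Q.vertex, Submodule k ↥(Sj Q i M' j)) :
    finrank k ↥(PiP Q i M' T)
      = finrank k ↥(Rng Q i M' ⊓ Ybox Q i M' T) + finrank k ↥(Kker Q i M') := by
  have h := LinearMap.finrank_range_add_finrank_ker ((phi Q i M').domRestrict (PiP Q i M' T))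
  rw [LinearMap.range_domRestrict, LinearMap.ker_domRestrict] at h
  have hrange : Submodule.map (phi Q i M') (PiP Q i M' T) = Rng Q i M' ⊓ Ybox Q i M' T := by
    rw [PiP, Submodule.map_comap_eq]; rfl
  have hker : finrank k ↥(Submodule.comap (PiP Q i M' T).subtype (LinearMap.ker (phi Q i M')))
      = finrank k ↥(Kker Q i M') :=
    (Submodule.comapSubtypeEquivOfLe (Kker_le_PiP' Q i M' T)).finrank_eq
  rw [hrange, hker] at h
  exact h.symm

lemma finrank_Ybox_lb (T : ∀ j : Q.vertex, Submodule k ↥(Sj Q i M' j)) :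
    ∑ a : Arr Q i, finrank k ↥(C1 Q i M' T (Q.src a.1)) ≤ finrank k ↥(Ybox Q i M' T) := by
  classical
  set J : (∀ a : Arr Q i, ↥(C1 Q i M' T (Q.src a.1))) →ₗ[k] Ebig Q i M' :=
    LinearMap.pi (fun a => (C1 Q i M' T (Q.src a.1)).subtype.comp (LinearMap.proj a)) with hJ
  have hrange : ∀ x, J x ∈ Ybox Q i M' T := by
    intro x
    rw [mem_Ybox]
    intro a
    exact (x a).2
  have hinj : Function.Injective (LinearMap.codRestrict _ J hrange) := by
    intro x y h
    have h' : J x = J y := congrArg Subtype.val h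
    funext a
    have := congrFun h' a
    exact Subtype.ext this
  have := LinearMap.finrank_le_finrank_of_injective hinj
  rwa [Module.finrank_pi_fintype k] at this

lemma finrank_piece_ub (T : ∀ j : Q.vertex, Submodule k ↥(Sj Q i M' j)) :
    finrank k ↥(U0 Q i M' ⊓ PiP Q i M' T)
      ≤ ∑ a : Arr Q i, finrank k ↥(C1 Q i M' T (Q.src a.1)) := by
  classical
  have hcoord : ∀ (u : ↥(U0 Q i M' ⊓ PiP Q i M' T)) (a : Arr Q i),
      phi Q i M' (u : Usp Q i M') a ∈ C1 Q i M' T (Q.src a.1) := by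
    intro u a
    exact (mem_Ybox Q i M').mp u.2.2 a
  set J : ↥(U0 Q i M' ⊓ PiP Q i M' T) →ₗ[k] (∀ a : Arr Q i, ↥(C1 Q i M' T (Q.src a.1))) :=
    LinearMap.pi (fun a => LinearMap.codRestrict _
      ((LinearMap.proj a).comp ((phi Q i M').comp (U0 Q i M' ⊓ PiP Q i M' T).subtype))
      (fun u => hcoord u a)) with hJ
  have hinj : Function.Injective J := by
    intro x y h
    have hphi : phi Q i M' (x : Usp Q i M') = phi Q i M' (y : Usp Q i M') := by
      funext a
      exact congrArg Subtype.val (congrFun h a)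
    have hker : ((x : Usp Q i M') - (y : Usp Q i M')) ∈ Kker Q i M' := by
      show phi Q i M' _ = 0
      rw [map_sub, hphi, sub_self]
    have hU0 : ((x : Usp Q i M') - (y : Usp Q i M')) ∈ U0 Q i M' :=
      Submodule.sub_mem _ x.2.1 y.2.1
    have := (isCompl_U0 Q i M').disjoint.le_bot ⟨hker, hU0⟩
    exact Subtype.ext (sub_eq_zero.mp ((Submodule.mem_bot k).mp this))
  have := LinearMap.finrank_le_finrank_of_injective hinj
  rwa [Module.finrank_pi_fintype k] at this

lemma finrank_U_Ybox_le (T : ∀ j : Q.vertex, Submodule k ↥(Sj Q i M' j)) :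
    finrank k (Usp Q i M') + finrank k ↥(Ybox Q i M' T)
      ≤ finrank k ↥(PiP Q i M' T) + finrank k (Ebig Q i M') := by
  have h1 : finrank k ↥(Rng Q i M') + finrank k ↥(Ybox Q i M' T)
      ≤ finrank k (Ebig Q i M') + finrank k ↥(Rng Q i M' ⊓ Ybox Q i M' T) := by
    have := Submodule.finrank_sup_add_finrank_inf_eq (Rng Q i M') (Ybox Q i M' T)
    have hle : finrank k ↥(Rng Q i M' ⊔ Ybox Q i M' T) ≤ finrank k (Ebig Q i M') :=
      Submodule.finrank_le _
    omega
  have h2 := finrank_U_split Q i M'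
  have h3 := finrank_PiP Q i M' T
  omega

/-- Dimension of a placed family. -/
lemma sum_place (x : Submodule k (Usp Q i M')) (base : ∀ j : Q.vertex, Submodule k (M'.space j)) :
    ∑ j : Q.vertex, finrank k ↥(place Q i M' x base j)
      = finrank k ↥x + ∑ j ∈ Finset.univ.erase i, finrank k ↥(base j) := by
  rw [← Finset.add_sum_erase _ _ (Finset.mem_univ i)]
  congr 1
  · rw [place_eq]
  · exact Finset.sum_congr rfl fun j hj => by
      rw [place_ne Q i M' x base (Finset.mem_erase.mp hj).1]

end Dimensions

end Stmt8Aux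
open Stmt8Aux Module Submodule

set_option maxHeartbeats 2000000 in
/-- if `Q` is a finite acyclic quiver of amenable representation type over a
field `k` and `i` is a sink of `Q`, then the reflected quiver `σ_i(Q)` is also of
amenable representation type over `k`. -/
theorem stmt_8 {k : Type u} [Field k] (Q : FinQuiver) (hacyc : Q.Acyclic)
    (i : Q.vertex) (hsink : ∀ a : Q.arrow, Q.src a ≠ i)
    (h : QuivRepAmenable k Q) :
    QuivRepAmenable k (Q.reflect i) := by
  classical
  intro ε hε
  set c : ℕ := Fintype.card (Arr Q i) with hc
  have hc1 : (0:ℝ) < 1 + (c:ℝ) := by positivity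
  set ε' : ℝ := ε / (1+(c:ℝ))^2 with hε'def
  have hε'pos : 0 < ε' := by positivity
  obtain ⟨L, hLpos, H⟩ := h ε' hε'pos
  refine ⟨(1+c) * L, Nat.mul_pos (by omega) hLpos, ?_⟩
  intro M' _
  obtain ⟨P, hPdim, t, N, hNdim, hNindep, hNsup⟩ := H (bigM Q i M' hsink) (Set.mem_univ _)
  set m : ℕ := finrank k ↥(Kker Q i M') with hm
  set b : Basis (Fin m) k ↥(Kker Q i M') := Module.finBasis k ↥(Kker Q i M') with hb
  set vv : Fin m → Usp Q i M' := fun r => ((b r : ↥(Kker Q i M')) : Usp Q i M') with hvv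
  have hvvmem : ∀ r, vv r ∈ Kker Q i M' := fun r => (b r).2
  have hvvli : LinearIndependent k vv :=
    b.linearIndependent.map' (Kker Q i M').subtype (Submodule.ker_subtype _)
  have hKsup : (⨆ r, Submodule.span k {vv r}) = Kker Q i M' := by
    rw [← Submodule.span_range_eq_iSup]
    have hr : Set.range vv = (Kker Q i M').subtype '' Set.range b := by
      rw [← Set.range_comp]; rfl
    rw [hr, Submodule.span_image, b.span_eq, Submodule.map_subtype_top]
  set NN : Fin t ⊕ Fin m → SubRep M' := Sum.elim
    (fun l => transPiece Q i M' hsink (N l))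
    (fun r => linePiece Q i M' hsink (vv r) (hvvmem r)) with hNN
  -- membership identification lemmas
  have eInl : ∀ l : Fin t, (NN (Sum.inl l)).toFun i
      = U0 Q i M' ⊓ PiP Q i M' (N l).toFun := by
    intro l; rw [hNN]; simp only [Sum.elim_inl, transPiece]; exact place_eq Q i M' _ _
  have eInr : ∀ r : Fin m, (NN (Sum.inr r)).toFun i = Submodule.span k {vv r} := by
    intro r; rw [hNN]; simp only [Sum.elim_inr, linePiece]; exact place_eq Q i M' _ _
  have eInl' : ∀ (l : Fin t) (j : Q.vertex), j ≠ i → (NN (Sum.inl l)).toFun j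
      = C1 Q i M' (N l).toFun j := by
    intro l j hj; rw [hNN]; simp only [Sum.elim_inl, transPiece]; exact place_ne Q i M' _ _ hj
  have eInr' : ∀ (r : Fin m) (j : Q.vertex), j ≠ i → (NN (Sum.inr r)).toFun j = ⊥ := by
    intro r j hj; rw [hNN]; simp only [Sum.elim_inr, linePiece]; exact place_ne Q i M' _ _ hj
  have ePi : (transSub Q i M' hsink P).toFun i = PiP Q i M' P.toFun := place_eq Q i M' _ _
  have ePne : ∀ j : Q.vertex, j ≠ i → (transSub Q i M' hsink P).toFun j
      = C1 Q i M' P.toFun j := fun j hj => place_ne Q i M' _ _ hj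
  refine ⟨transSub Q i M' hsink P, ?_, t + m,
    fun s => NN (finSumFinEquiv.symm s), ?_, ?_, ?_⟩
  · -- dimension lower bound
    have f1 : M'.dim = finrank k (Usp Q i M')
        + ∑ j ∈ Finset.univ.erase i, finrank k (M'.space j) := by
      show (∑ j : Q.vertex, finrank k (M'.space j)) = _
      rw [← Finset.add_sum_erase _ _ (Finset.mem_univ i)]
    have f2 : (transSub Q i M' hsink P).dim = finrank k ↥(PiP Q i M' P.toFun)
        + ∑ j ∈ Finset.univ.erase i, finrank k ↥(C1 Q i M' P.toFun j) :=
      sum_place Q i M' _ _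
    have f3 := finrank_U_Ybox_le Q i M' P.toFun
    have f5 : finrank k (Ebig Q i M')
        = ∑ a : Arr Q i, finrank k (M'.space (Q.src a.1)) := finrank_Ebig Q i M'
    have f6 : (bigM Q i M' hsink).dim = finrank k ↥(Ccomp Q i M')
        + ∑ j ∈ Finset.univ.erase i, finrank k (M'.space j) := by
      show (∑ j : Q.vertex, finrank k ↥(Sj Q i M' j)) = _
      rw [← Finset.add_sum_erase _ _ (Finset.mem_univ i)]
      congr 1
      · exact finrank_Sj_i Q i M'
      · exact Finset.sum_congr rfl fun j hj => finrank_Sj_ne Q i M' (Finset.mem_erase.mp hj).1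
    have f7 : P.dim = finrank k ↥(P.toFun i)
        + ∑ j ∈ Finset.univ.erase i, finrank k ↥(P.toFun j) := by
      show (∑ j : Q.vertex, finrank k ↥(P.toFun j)) = _
      rw [← Finset.add_sum_erase _ _ (Finset.mem_univ i)]
    have f8 : finrank k ↥(P.toFun i) ≤ finrank k ↥(Ccomp Q i M') :=
      le_trans (Submodule.finrank_le _) (le_of_eq (finrank_Sj_i Q i M'))
    have f9 : ∑ j ∈ Finset.univ.erase i, finrank k ↥(C1 Q i M' P.toFun j)
        = ∑ j ∈ Finset.univ.erase i, finrank k ↥(P.toFun j) :=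
      Finset.sum_congr rfl fun j hj => finrank_C1 Q i M' _ (Finset.mem_erase.mp hj).1
    have f4' : ∑ a : Arr Q i, finrank k ↥(P.toFun (Q.src a.1))
        ≤ finrank k ↥(Ybox Q i M' P.toFun) := by
      refine le_trans (le_of_eq ?_) (finrank_Ybox_lb Q i M' P.toFun)
      exact Finset.sum_congr rfl fun a _ => (finrank_C1 Q i M' _ (hsink a.1)).symm
    have f10 : ∀ a : Arr Q i, finrank k (M'.space (Q.src a.1)) + P.dim
        ≤ finrank k ↥(P.toFun (Q.src a.1)) + (bigM Q i M' hsink).dim := by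
      intro a
      have hA : P.dim = finrank k ↥(P.toFun (Q.src a.1))
          + ∑ j ∈ Finset.univ.erase (Q.src a.1), finrank k ↥(P.toFun j) := by
        show (∑ j : Q.vertex, finrank k ↥(P.toFun j)) = _
        rw [← Finset.add_sum_erase _ _ (Finset.mem_univ (Q.src a.1))]
      have hB : (bigM Q i M' hsink).dim = finrank k ↥(Sj Q i M' (Q.src a.1))
          + ∑ j ∈ Finset.univ.erase (Q.src a.1), finrank k ↥(Sj Q i M' j) := by
        show (∑ j : Q.vertex, finrank k ↥(Sj Q i M' j)) = _
        rw [← Finset.add_sum_erase _ _ (Finset.mem_univ (Q.src a.1))]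
      have hC : ∑ j ∈ Finset.univ.erase (Q.src a.1), finrank k ↥(P.toFun j)
          ≤ ∑ j ∈ Finset.univ.erase (Q.src a.1), finrank k ↥(Sj Q i M' j) :=
        Finset.sum_le_sum fun j _ => Submodule.finrank_le _
      have hD : finrank k (M'.space (Q.src a.1)) = finrank k ↥(Sj Q i M' (Q.src a.1)) :=
        (finrank_Sj_ne Q i M' (hsink a.1)).symm
      omega
    have f10s : ∑ a : Arr Q i, finrank k (M'.space (Q.src a.1)) + c * P.dim
        ≤ ∑ a : Arr Q i, finrank k ↥(P.toFun (Q.src a.1))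
          + c * (bigM Q i M' hsink).dim := by
      have hs := Finset.sum_le_sum (fun a (_ : a ∈ (Finset.univ : Finset (Arr Q i))) => f10 a)
      rw [Finset.sum_add_distrib, Finset.sum_add_distrib, Finset.sum_const, Finset.sum_const,
        Finset.card_univ, smul_eq_mul, smul_eq_mul] at hs
      exact hs
    have f11 : ∑ j ∈ Finset.univ.erase i, finrank k (M'.space j) + P.dim
        ≤ ∑ j ∈ Finset.univ.erase i, finrank k ↥(P.toFun j) + (bigM Q i M' hsink).dim := by
      omega
    have hccd : finrank k ↥(Ccomp Q i M') ≤ finrank k (Ebig Q i M') := Submodule.finrank_le _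
    have hSaM : ∑ a : Arr Q i, finrank k (M'.space (Q.src a.1)) ≤ c * M'.dim := by
      have hone : ∀ a : Arr Q i, finrank k (M'.space (Q.src a.1)) ≤ M'.dim := by
        intro a
        show _ ≤ (∑ j : Q.vertex, finrank k (M'.space j))
        exact Finset.single_le_sum (f := fun j => finrank k (M'.space j))
          (fun _ _ => Nat.zero_le _) (Finset.mem_univ _)
      calc ∑ a : Arr Q i, finrank k (M'.space (Q.src a.1))
          ≤ ∑ _a : Arr Q i, M'.dim := Finset.sum_le_sum fun a _ => hone a
        _ = c * M'.dim := by rw [Finset.sum_const, Finset.card_univ, smul_eq_mul]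
    have I1 : M'.dim + (1 + c) * P.dim
        ≤ (transSub Q i M' hsink P).dim + (1 + c) * (bigM Q i M' hsink).dim := by
      have hX : (1 + c) * P.dim = P.dim + c * P.dim := by ring
      have hY : (1 + c) * (bigM Q i M' hsink).dim
          = (bigM Q i M' hsink).dim + c * (bigM Q i M' hsink).dim := by ring
      omega
    have I5 : (bigM Q i M' hsink).dim ≤ (1 + c) * M'.dim := by
      have hZ : (1 + c) * M'.dim = M'.dim + c * M'.dim := by ring
      omega
    -- real arithmetic
    have cI1 : (M'.dim : ℝ) + (1 + (c:ℝ)) * (P.dim : ℝ)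
        ≤ ((transSub Q i M' hsink P).dim : ℝ)
          + (1 + (c:ℝ)) * ((bigM Q i M' hsink).dim : ℝ) := by
      exact_mod_cast I1
    have cI5 : ((bigM Q i M' hsink).dim : ℝ) ≤ (1 + (c:ℝ)) * (M'.dim : ℝ) := by
      exact_mod_cast I5
    have hB : ((bigM Q i M' hsink).dim : ℝ) - (P.dim : ℝ)
        ≤ ε' * ((bigM Q i M' hsink).dim : ℝ) := by nlinarith [hPdim]
    have hD : (1 + (c:ℝ)) * (((bigM Q i M' hsink).dim : ℝ) - (P.dim : ℝ))
        ≤ (1 + (c:ℝ)) * (ε' * ((bigM Q i M' hsink).dim : ℝ)) :=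
      mul_le_mul_of_nonneg_left hB hc1.le
    have hE : ε' * ((bigM Q i M' hsink).dim : ℝ) ≤ ε' * ((1 + (c:ℝ)) * (M'.dim : ℝ)) :=
      mul_le_mul_of_nonneg_left cI5 hε'pos.le
    have hF : (1 + (c:ℝ)) * (ε' * ((1 + (c:ℝ)) * (M'.dim : ℝ))) = ε * (M'.dim : ℝ) := by
      have hne : (1 + (c:ℝ)) ≠ 0 := ne_of_gt hc1
      rw [hε'def]
      field_simp
    nlinarith [hD, hE, hF, cI1, mul_le_mul_of_nonneg_left hE hc1.le]
  · -- piece dimension bounds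
    intro s
    show (NN (finSumFinEquiv.symm s)).dim ≤ (1+c) * L
    rcases hs : finSumFinEquiv.symm s with l | r
    · -- transferred piece
      have hdim : (NN (Sum.inl l)).dim
          = finrank k ↥(U0 Q i M' ⊓ PiP Q i M' (N l).toFun)
            + ∑ j ∈ Finset.univ.erase i, finrank k ↥(C1 Q i M' (N l).toFun j) :=
        sum_place Q i M' _ _
      have h1 : finrank k ↥(U0 Q i M' ⊓ PiP Q i M' (N l).toFun)
          ≤ ∑ a : Arr Q i, finrank k ↥(C1 Q i M' (N l).toFun (Q.src a.1)) :=
        finrank_piece_ub Q i M' _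
      have h2 : ∑ a : Arr Q i, finrank k ↥(C1 Q i M' (N l).toFun (Q.src a.1)) ≤ c * L := by
        calc ∑ a : Arr Q i, finrank k ↥(C1 Q i M' (N l).toFun (Q.src a.1))
            = ∑ a : Arr Q i, finrank k ↥((N l).toFun (Q.src a.1)) :=
              Finset.sum_congr rfl fun a _ => finrank_C1 Q i M' _ (hsink a.1)
          _ ≤ ∑ _a : Arr Q i, L := Finset.sum_le_sum fun a _ => le_trans
              (Finset.single_le_sum (f := fun v => finrank k ↥((N l).toFun v))
                (fun _ _ => Nat.zero_le _) (Finset.mem_univ _)) (hNdim l)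
          _ = c * L := by rw [Finset.sum_const, Finset.card_univ, smul_eq_mul]
      have h3 : ∑ j ∈ Finset.univ.erase i, finrank k ↥(C1 Q i M' (N l).toFun j) ≤ L := by
        calc ∑ j ∈ Finset.univ.erase i, finrank k ↥(C1 Q i M' (N l).toFun j)
            = ∑ j ∈ Finset.univ.erase i, finrank k ↥((N l).toFun j) :=
              Finset.sum_congr rfl fun j hj => finrank_C1 Q i M' _ (Finset.mem_erase.mp hj).1
          _ ≤ ∑ j : Q.vertex, finrank k ↥((N l).toFun j) :=
              Finset.sum_le_sum_of_subset (Finset.erase_subset _ _)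
          _ ≤ L := hNdim l
      rw [hdim]
      have : (1+c) * L = c * L + L := by ring
      omega
    · -- line piece
      have hdim : (NN (Sum.inr r)).dim
          = finrank k ↥(Submodule.span k {vv r})
            + ∑ j ∈ Finset.univ.erase i, finrank k ↥((⊥ : Submodule k (M'.space j))) :=
        sum_place Q i M' _ _
      have hvne : vv r ≠ 0 := by
        intro h0
        simp only [hvv] at h0
        rw [Submodule.coe_eq_zero] at h0
        exact b.ne_zero r h0
      have hone : finrank k ↥(Submodule.span k {vv r}) = 1 := finrank_span_singleton hvne
      have hz : ∑ j ∈ Finset.univ.erase i, finrank k ↥((⊥ : Submodule k (M'.space j))) = 0 := by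
        refine Finset.sum_eq_zero fun j _ => ?_
        exact finrank_bot k _
      have hL1 : 1 * 1 ≤ (1+c) * L := Nat.mul_le_mul (by omega) hLpos
      rw [hdim, hone, hz]
      omega
  · -- independence
    intro j
    have hsum_indep : iSupIndep (fun s : Fin t ⊕ Fin m => (NN s).toFun j) := by
      by_cases hj : j = i
      · rw [hj]
        apply iSupIndep_of_sumzero
        intro g hgsum s
        have hmeminl : ∀ l : Fin t,
            ((g (Sum.inl l) : M'.space i)) ∈ U0 Q i M' ⊓ PiP Q i M' (N l).toFun := by
          intro l
          rw [← eInl l]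
          exact (g (Sum.inl l)).2
        have hmeminr : ∀ r : Fin m,
            ((g (Sum.inr r) : M'.space i)) ∈ Submodule.span k {vv r} := by
          intro r
          rw [← eInr r]
          exact (g (Sum.inr r)).2
        have hKinr : ∀ r : Fin m, ((g (Sum.inr r) : M'.space i)) ∈ Kker Q i M' := by
          intro r
          refine Submodule.span_le.mpr ?_ (hmeminr r)
          simpa using hvvmem r
        have h0 : ∑ l : Fin t, phi Q i M' (g (Sum.inl l) : M'.space i) = 0 := by
          have hphi : phi Q i M' (∑ s, ((g s : M'.space i))) = 0 := by rw [hgsum, map_zero]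
          rw [map_sum, Fintype.sum_sum_type] at hphi
          have hz2 : ∀ r, phi Q i M' ((g (Sum.inr r) : M'.space i)) = 0 := fun r => hKinr r
          rw [Finset.sum_eq_zero (fun r _ => hz2 r), add_zero] at hphi
          exact hphi
        have hYmem : ∀ l, phi Q i M' ((g (Sum.inl l) : M'.space i))
            ∈ Ybox Q i M' (N l).toFun := fun l => (hmeminl l).2
        have hinl0 : ∀ l, ((g (Sum.inl l) : M'.space i)) = 0 := by
          intro l
          have hφ0 := sumzero_of_iSupIndep (Ybox_indep Q i M' hsink N hNindep)
            (fun l => ⟨_, hYmem l⟩) h0 l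
          have hker : ((g (Sum.inl l) : M'.space i)) ∈ Kker Q i M' := hφ0
          have hU0m : ((g (Sum.inl l) : M'.space i)) ∈ U0 Q i M' := (hmeminl l).1
          exact (Submodule.mem_bot k).mp ((isCompl_U0 Q i M').disjoint.le_bot ⟨hker, hU0m⟩)
        have hinrsum : ∑ r : Fin m, ((g (Sum.inr r) : M'.space i)) = 0 := by
          rw [Fintype.sum_sum_type] at hgsum
          rw [Finset.sum_eq_zero (fun l _ => hinl0 l), zero_add] at hgsum
          exact hgsum
        have hinr0 : ∀ r, ((g (Sum.inr r) : M'.space i)) = 0 := fun r =>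
          sumzero_of_iSupIndep hvvli.iSupIndep_span_singleton
            (fun r => ⟨_, hmeminr r⟩) hinrsum r
        cases s with
        | inl l => exact hinl0 l
        | inr r => exact hinr0 r
      · apply iSupIndep_of_sumzero
        intro g hgsum s
        have hinr0 : ∀ r, ((g (Sum.inr r) : M'.space j)) = 0 := by
          intro r
          have hmem : ((g (Sum.inr r) : M'.space j)) ∈ (⊥ : Submodule k (M'.space j)) := by
            rw [← eInr' r j hj]
            exact (g (Sum.inr r)).2
          simpa using hmem
        have hinlsum : ∑ l : Fin t, ((g (Sum.inl l) : M'.space j)) = 0 := by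
          rw [Fintype.sum_sum_type] at hgsum
          rw [Finset.sum_eq_zero (fun r _ => hinr0 r), add_zero] at hgsum
          exact hgsum
        have hCmem : ∀ l, ((g (Sum.inl l) : M'.space j)) ∈ C1 Q i M' (N l).toFun j := by
          intro l
          rw [← eInl' l j hj]
          exact (g (Sum.inl l)).2
        have hinl0 : ∀ l, ((g (Sum.inl l) : M'.space j)) = 0 := fun l =>
          sumzero_of_iSupIndep (C1_indep Q i M' hsink N hNindep hj)
            (fun l => ⟨_, hCmem l⟩) hinlsum l
        cases s with
        | inl l => exact hinl0 l
        | inr r => exact hinr0 r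
    exact hsum_indep.comp finSumFinEquiv.symm.injective
  · -- supremum identity
    intro j
    show (⨆ s : Fin (t+m), (NN (finSumFinEquiv.symm s)).toFun j)
      = (transSub Q i M' hsink P).toFun j
    have he : (⨆ s : Fin (t+m), (NN (finSumFinEquiv.symm s)).toFun j)
        = ⨆ s : Fin t ⊕ Fin m, (NN s).toFun j :=
      Equiv.iSup_comp (g := fun s => (NN s).toFun j) finSumFinEquiv.symm
    rw [he, iSup_sum]
    by_cases hj : j = i
    · rw [hj]
      have h1 : (⨆ l : Fin t, (NN (Sum.inl l)).toFun i)
          = ⨆ l : Fin t, (U0 Q i M' ⊓ PiP Q i M' (N l).toFun) := iSup_congr eInl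
      have h2 : (⨆ r : Fin m, (NN (Sum.inr r)).toFun i)
          = Kker Q i M' := by
        rw [iSup_congr eInr]; exact hKsup
      rw [h1, h2, ePi]
      exact sup_at_i Q i M' hsink P N hNindep hNsup
    · have h1 : (⨆ l : Fin t, (NN (Sum.inl l)).toFun j)
          = ⨆ l : Fin t, C1 Q i M' (N l).toFun j := iSup_congr (fun l => eInl' l j hj)
      have h2 : (⨆ r : Fin m, (NN (Sum.inr r)).toFun j) = ⊥ := by
        rw [iSup_congr (fun r => eInr' r j hj)]; exact iSup_bot
      rw [h1, h2, sup_bot_eq, ePne j hj]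
      exact C1_sup Q i M' hsink P N hNsup j
end

section
/- Let k be any field and Q the 2-Kronecker quiver with two vertices 1, 2 and two arrows a, b : 1 → 2. For i ≥ 0 let P_i denote the representation with P_i(1) = k^i, P_i(2) = k^{i+1}, where a acts as the matrix [id; 0] (the i×i identity on top of a zero row block) and b acts as [0; id] (a zero row block on top of the i×i identity). Then the family {P_i : i ≥ 0} of representations of Q is hyperfinite. -/
/-!
Hyperfiniteness for families of finite-dimensional representations of finite quivers,
following Elek.
-/

universe u

variable {k : Type u} [Field k] {Q : FinQuiver}

/-- The 2-Kronecker quiver: vertices `false = 1` and `true = 2`, arrows `false = a` and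
`true = b`, both from vertex `1` to vertex `2`. -/
def Kronecker : FinQuiver where
  vertex := Bool
  arrow := Bool
  src := fun _ => false
  tgt := fun _ => true

/-- The representation of the 2-Kronecker quiver with spaces `k^n` (at vertex `1`) and
`k^m` (at vertex `2`), where the arrow `a` acts via the matrix `A` and the arrow `b` acts
via the matrix `B`. -/
noncomputable def kronRep (k : Type u) [Field k] (n m : ℕ)
    (A B : Matrix (Fin m) (Fin n) k) : QuivRep k Kronecker where
  space := fun v => Bool.rec (Fin n → k) (Fin m → k) v
  acg := fun v => by cases v <;> infer_instance
  mod := fun v => by cases v <;> infer_instance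
  fd := fun v => by cases v <;> infer_instance
  map := fun a => Matrix.toLin' (cond a B A)

/-- The matrix `[id; 0]` : the `i × i` identity on top of a zero row block. -/
def idZeroMat (k : Type u) [Field k] (i : ℕ) : Matrix (Fin (i + 1)) (Fin i) k :=
  Matrix.of fun r c => if (r : ℕ) = (c : ℕ) then 1 else 0

/-- The matrix `[0; id]` : a zero row block on top of the `i × i` identity. -/
def zeroIdMat (k : Type u) [Field k] (i : ℕ) : Matrix (Fin (i + 1)) (Fin i) k :=
  Matrix.of fun r c => if (r : ℕ) = (c : ℕ) + 1 then 1 else 0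

/-- The indecomposable preprojective representation `P_i` of the 2-Kronecker quiver:
`P_i(1) = k^i`, `P_i(2) = k^{i+1}`, `a` acts as `[id; 0]` and `b` acts as `[0; id]`. -/
noncomputable def kronP (k : Type u) [Field k] (i : ℕ) : QuivRep k Kronecker :=
  kronRep k i (i + 1) (idZeroMat k i) (zeroIdMat k i)

namespace Stmt9Aux
variable {k : Type u} [Field k]

/-- Functions supported on `S`. -/
def supp {n : ℕ} (S : Finset (Fin n)) : Submodule k (Fin n → k) where
  carrier := {x | ∀ c ∉ S, x c = 0}
  add_mem' := fun {a b} ha hb c hc => by simp [ha c hc, hb c hc]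
  zero_mem' := fun c _ => rfl
  smul_mem' := fun r x hx c hc => by simp [hx c hc]

lemma mem_supp {n : ℕ} {S : Finset (Fin n)} {x : Fin n → k} :
    x ∈ supp S ↔ ∀ c ∉ S, x c = 0 := Iff.rfl

lemma supp_mono {n : ℕ} {S T : Finset (Fin n)} (h : S ⊆ T) :
    supp (k := k) S ≤ supp T :=
  fun x hx c hc => hx c (fun hcS => hc (h hcS))

lemma supp_univ {n : ℕ} : supp (k := k) (Finset.univ : Finset (Fin n)) = ⊤ := by
  ext x; simp [mem_supp]

noncomputable def suppEquiv {n : ℕ} (S : Finset (Fin n)) : supp (k := k) S ≃ₗ[k] (S → k) where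
  toFun x c := x.1 c
  map_add' _ _ := rfl
  map_smul' _ _ := rfl
  invFun y := ⟨fun c => if h : c ∈ S then y ⟨c, h⟩ else 0, fun c hc => dif_neg hc⟩
  left_inv x := Subtype.ext (funext fun c => by
    by_cases h : c ∈ S
    · simp [h]
    · simp [h, x.2 c h])
  right_inv y := funext fun c => by simp

lemma finrank_supp {n : ℕ} (S : Finset (Fin n)) :
    Module.finrank k (supp (k := k) S) = S.card := by
  rw [(suppEquiv S).finrank_eq]
  simp [Module.finrank_fintype_fun_eq_card]

lemma disjoint_supp {n : ℕ} {A B : Finset (Fin n)} (h : ∀ c ∈ A, c ∉ B) :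
    Disjoint (supp (k := k) A) (supp B) := by
  rw [Submodule.disjoint_def]
  intro x hA hB
  funext c
  by_cases hc : c ∈ A
  · exact hB c (h c hc)
  · exact hA c hc

lemma iSupIndep_supp {n t : ℕ} (S : Fin t → Finset (Fin n))
    (hdis : ∀ j l, j ≠ l → ∀ c ∈ S j, c ∉ S l) :
    iSupIndep fun j => supp (k := k) (S j) := by
  intro j
  have hle : (⨆ l, ⨆ (_ : l ≠ j), supp (k := k) (S l)) ≤
      supp (Finset.univ.biUnion fun l => if l = j then ∅ else S l) := by
    refine iSup₂_le fun l hl => supp_mono fun c hc => ?_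
    exact Finset.mem_biUnion.2 ⟨l, Finset.mem_univ l, by simp [hl, hc]⟩
  refine Disjoint.mono_right hle (disjoint_supp fun c hc hc' => ?_)
  obtain ⟨l, -, hcl⟩ := Finset.mem_biUnion.1 hc'
  by_cases h : l = j
  · simp [h] at hcl
  · exact hdis j l (Ne.symm h) c hc (by simpa [h] using hcl)

lemma iSup_supp {n t : ℕ} (S : Fin t → Finset (Fin n))
    (hdis : ∀ j l, j ≠ l → ∀ c ∈ S j, c ∉ S l) :
    (⨆ j, supp (k := k) (S j)) = supp (Finset.univ.biUnion S) := by
  apply le_antisymm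
  · exact iSup_le fun j => supp_mono fun c hc =>
      Finset.mem_biUnion.2 ⟨j, Finset.mem_univ j, hc⟩
  · intro x hx
    have hxe : x = ∑ j, (fun c => if c ∈ S j then x c else 0) := by
      funext c
      rw [Finset.sum_apply]
      by_cases h : ∃ j, c ∈ S j
      · obtain ⟨j0, hj0⟩ := h
        rw [Finset.sum_eq_single j0]
        · simp [hj0]
        · intro l _ hl
          exact if_neg (fun hcl => hdis l j0 hl c hcl hj0)
        · simp
      · push_neg at h
        have : c ∉ Finset.univ.biUnion S := by
          simp only [Finset.mem_biUnion]; rintro ⟨j, -, hj⟩; exact h j hj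
        simp [hx c this, fun j => h j]
    rw [hxe]
    exact Submodule.sum_mem _ fun j _ =>
      Submodule.mem_iSup_of_mem j (fun c hc => if_neg hc)

section Kron
variable {k : Type u} [Field k]

lemma toLin'_mem_supp {n m : ℕ} (f : Fin m → Fin n → Prop) [∀ r c, Decidable (f r c)]
    {S₁ : Finset (Fin n)} {S₂ : Finset (Fin m)}
    (h : ∀ c ∈ S₁, ∀ r : Fin m, f r c → r ∈ S₂)
    {x : Fin n → k} (hx : x ∈ supp S₁) :
    Matrix.toLin' (Matrix.of fun r c => if f r c then (1:k) else 0) x ∈ supp S₂ := by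
  rw [mem_supp]
  intro r hr
  rw [Matrix.toLin'_apply]
  show ∑ c, (if f r c then (1:k) else 0) * x c = 0
  apply Finset.sum_eq_zero
  intro c _
  by_cases hc : f r c
  · have : c ∉ S₁ := fun hmem => hr (h c hmem r hc)
    simp [hx c this]
  · simp [hc]


lemma succ_div_eq {m c : ℕ} (hm : 0 < m) (h : c % m ≠ m - 1) : (c + 1) / m = c / m := by
  have h1 : c % m + 1 < m := by have := Nat.mod_lt c hm; omega
  conv_lhs => rw [← Nat.div_add_mod c m]
  rw [add_assoc, Nat.mul_add_div hm, Nat.div_eq_of_lt h1, add_zero]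

/-- A subrepresentation of `kronP k i` given by coordinate subsets. -/
def kronSub (i : ℕ) (A : Finset (Fin i)) (B : Finset (Fin (i+1)))
    (hAB : ∀ c ∈ A, ∀ r : Fin (i+1), ((r:ℕ) = (c:ℕ) ∨ (r:ℕ) = (c:ℕ) + 1) → r ∈ B) :
    SubRep (kronP k i) where
  toFun := fun v => match v with
    | false => supp A
    | true => supp B
  compat := fun a => by
    cases a with
    | false =>
      intro x hx
      exact toLin'_mem_supp (fun r c => (r:ℕ) = (c:ℕ))
        (fun c hc r hr => hAB c hc r (Or.inl hr)) hx
    | true =>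
      intro x hx
      exact toLin'_mem_supp (fun r c => (r:ℕ) = (c:ℕ) + 1)
        (fun c hc r hr => hAB c hc r (Or.inr hr)) hx

lemma subrep_dim_bool {M : QuivRep k Kronecker} (P : SubRep M) :
    P.dim = Module.finrank k (P.toFun true) + Module.finrank k (P.toFun false) :=
  Fintype.sum_bool _

lemma quivrep_dim_bool (M : QuivRep k Kronecker) :
    M.dim = @Module.finrank k (M.space true) _ (M.acg true).toAddCommMonoid (M.mod true) +
      @Module.finrank k (M.space false) _ (M.acg false).toAddCommMonoid (M.mod false) :=
  Fintype.sum_bool _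

lemma kronSub_dim (i : ℕ) (A : Finset (Fin i)) (B : Finset (Fin (i+1))) (hAB) :
    (kronSub (k := k) i A B hAB).dim = A.card + B.card := by
  rw [subrep_dim_bool]
  show Module.finrank k (supp B) + Module.finrank k (supp A) = _
  exact (congrArg₂ (· + ·) (finrank_supp B) (finrank_supp A)).trans (add_comm _ _)

lemma kronP_dim (i : ℕ) : (kronP k i).dim = 2 * i + 1 := by
  rw [quivrep_dim_bool]
  show Module.finrank k (Fin (i+1) → k) + Module.finrank k (Fin i → k) = _
  rw [Module.finrank_fin_fun, Module.finrank_fin_fun]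
  omega


/-- Block `j` of columns at vertex 1. -/
def S1 (i m t : ℕ) (j : Fin t) : Finset (Fin i) :=
  Finset.univ.filter fun c => (c:ℕ)/m = (j:ℕ) ∧ (c:ℕ)%m ≠ m-1

/-- Block `j` of rows at vertex 2. -/
def S2 (i m t : ℕ) (j : Fin t) : Finset (Fin (i+1)) :=
  Finset.univ.filter fun r => (r:ℕ)/m = (j:ℕ)

lemma S1_card_le {i m t : ℕ} (hm : 0 < m) (j : Fin t) : (S1 i m t j).card ≤ m :=
  calc (S1 i m t j).card ≤ (Finset.range m).card := by
        refine Finset.card_le_card_of_injOn (fun c : Fin i => (c:ℕ) % m)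
          (fun c _ => Finset.mem_range.2 (Nat.mod_lt _ hm)) ?_
        intro c hc c' hc' hcc
        simp only [S1, Finset.coe_filter, Finset.mem_univ, true_and,
          Set.mem_setOf_eq] at hc hc'
        have hcc' : (c:ℕ) % m = (c':ℕ) % m := hcc
        have h3 : (c:ℕ)/m = (c':ℕ)/m := by omega
        have h1 := Nat.div_add_mod (c:ℕ) m
        have h2 := Nat.div_add_mod (c':ℕ) m
        rw [h3] at h1
        exact Fin.ext (by omega)
    _ = m := Finset.card_range m

lemma S2_card_le {i m t : ℕ} (hm : 0 < m) (j : Fin t) : (S2 i m t j).card ≤ m :=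
  calc (S2 i m t j).card ≤ (Finset.range m).card := by
        refine Finset.card_le_card_of_injOn (fun r : Fin (i+1) => (r:ℕ) % m)
          (fun r _ => Finset.mem_range.2 (Nat.mod_lt _ hm)) ?_
        intro c hc c' hc' hcc
        simp only [S2, Finset.coe_filter, Finset.mem_univ, true_and,
          Set.mem_setOf_eq] at hc hc'
        have hcc' : (c:ℕ) % m = (c':ℕ) % m := hcc
        have h3 : (c:ℕ)/m = (c':ℕ)/m := by omega
        have h1 := Nat.div_add_mod (c:ℕ) m
        have h2 := Nat.div_add_mod (c':ℕ) m
        rw [h3] at h1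
        exact Fin.ext (by omega)
    _ = m := Finset.card_range m

lemma S1_disj {i m t : ℕ} : ∀ j l : Fin t, j ≠ l → ∀ c ∈ S1 i m t j, c ∉ S1 i m t l := by
  intro j l hjl c hc hc'
  simp only [S1, Finset.mem_filter] at hc hc'
  exact hjl (Fin.ext (by omega))

lemma S2_disj {i m t : ℕ} : ∀ j l : Fin t, j ≠ l → ∀ c ∈ S2 i m t j, c ∉ S2 i m t l := by
  intro j l hjl c hc hc'
  simp only [S2, Finset.mem_filter] at hc hc'
  exact hjl (Fin.ext (by omega))

lemma S1_biUnion {i m : ℕ} (hm : 0 < m) :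
    Finset.univ.biUnion (S1 i m (i/m+1)) =
      Finset.univ.filter (fun c : Fin i => (c:ℕ) % m ≠ m - 1) := by
  ext c
  simp only [Finset.mem_biUnion, Finset.mem_univ, true_and, S1, Finset.mem_filter]
  constructor
  · rintro ⟨j, -, h⟩; exact h
  · intro h
    have hb : (c:ℕ)/m < i/m + 1 :=
      Nat.lt_succ_of_le (Nat.div_le_div_right (le_of_lt c.isLt))
    exact ⟨⟨(c:ℕ)/m, hb⟩, rfl, h⟩

lemma S2_biUnion {i m : ℕ} (hm : 0 < m) :
    Finset.univ.biUnion (S2 i m (i/m+1)) = Finset.univ := by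
  ext r
  simp only [Finset.mem_biUnion, Finset.mem_univ, true_and, S2, Finset.mem_filter, iff_true]
  have hb : (r:ℕ)/m < i/m + 1 :=
    Nat.lt_succ_of_le (Nat.div_le_div_right (Nat.lt_succ_iff.1 r.isLt))
  exact ⟨⟨(r:ℕ)/m, hb⟩, rfl⟩

lemma D_card_le {i m : ℕ} (hm : 0 < m) :
    (Finset.univ.filter (fun c : Fin i => (c:ℕ) % m = m - 1)).card ≤ i / m :=
  calc (Finset.univ.filter (fun c : Fin i => (c:ℕ) % m = m - 1)).card
      ≤ (Finset.range (i/m)).card := by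
        refine Finset.card_le_card_of_injOn (fun c : Fin i => (c:ℕ) / m) ?_ ?_
        · intro c hc
          simp only [Finset.coe_filter, Finset.mem_filter, Finset.mem_univ, true_and, Set.mem_setOf_eq] at hc
          have h1 := Nat.div_add_mod (c:ℕ) m
          have h2 : (c:ℕ) + 1 ≤ i := c.isLt
          rw [Finset.mem_coe, Finset.mem_range, Nat.lt_iff_add_one_le, Nat.le_div_iff_mul_le hm]
          show ((c:ℕ)/m + 1) * m ≤ i
          have h4 : ((c:ℕ)/m + 1) * m = m * ((c:ℕ)/m) + m := by ring
          omega
        · intro c hc c' hc' hcc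
          simp only [Finset.coe_filter, Finset.mem_univ, true_and,
            Set.mem_setOf_eq] at hc hc'
          have hcc' : (c:ℕ) / m = (c':ℕ) / m := hcc
          have h1 := Nat.div_add_mod (c:ℕ) m
          have h2 := Nat.div_add_mod (c':ℕ) m
          rw [hcc'] at h1
          exact Fin.ext (by omega)
    _ = i / m := Finset.card_range _

end Kron
end Stmt9Aux

/-- the family `{P_i : i ≥ 0}` of indecomposable preprojective
representations of the 2-Kronecker quiver is hyperfinite, over any field. -/
theorem stmt_9 {k : Type u} [Field k] :
    QuivRepHyperfinite (Set.range (kronP k)) := by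
  intro ε hε
  have hm0 : 0 < ⌈1/ε⌉₊ := Nat.ceil_pos.2 (by positivity)
  set m : ℕ := ⌈1/ε⌉₊ with hmdef
  refine ⟨2 * m, by omega, ?_⟩
  rintro M ⟨i, rfl⟩
  have hcompat : ∀ j : Fin (i/m+1), ∀ c ∈ Stmt9Aux.S1 i m (i/m+1) j, ∀ r : Fin (i+1),
      ((r:ℕ) = (c:ℕ) ∨ (r:ℕ) = (c:ℕ)+1) → r ∈ Stmt9Aux.S2 i m (i/m+1) j := by
    intro j c hc r hr
    simp only [Stmt9Aux.S1, Finset.mem_filter, Finset.mem_univ, true_and] at hc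
    simp only [Stmt9Aux.S2, Finset.mem_filter, Finset.mem_univ, true_and]
    rcases hr with h | h
    · rw [h]; exact hc.1
    · rw [h, Stmt9Aux.succ_div_eq hm0 hc.2]; exact hc.1
  refine ⟨Stmt9Aux.kronSub i (Finset.univ.filter fun c : Fin i => (c:ℕ)%m ≠ m-1)
      Finset.univ (fun _ _ r _ => Finset.mem_univ r), ?_, i/m+1,
      fun j => Stmt9Aux.kronSub i (Stmt9Aux.S1 i m (i/m+1) j)
        (Stmt9Aux.S2 i m (i/m+1) j) (hcompat j),
      ?_, ?_, ?_⟩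
  · -- dimension bound
    rw [Stmt9Aux.kronSub_dim, Stmt9Aux.kronP_dim]
    have hcompl : (Finset.univ.filter fun c : Fin i => (c:ℕ)%m ≠ m-1)
        = (Finset.univ.filter fun c : Fin i => (c:ℕ)%m = m-1)ᶜ := by
      ext c; simp
    have hKcard : (Finset.univ.filter fun c : Fin i => (c:ℕ)%m ≠ m-1).card
        = i - (Finset.univ.filter fun c : Fin i => (c:ℕ)%m = m-1).card := by
      rw [hcompl, Finset.card_compl, Fintype.card_fin]
    set d : ℕ := (Finset.univ.filter fun c : Fin i => (c:ℕ)%m = m-1).card with hd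
    have hDle : d ≤ i / m := Stmt9Aux.D_card_le hm0
    have h5 : d * m ≤ i := (Nat.le_div_iff_mul_le hm0).1 hDle
    have hDi : d ≤ i := le_trans hDle (Nat.div_le_self _ _)
    have huniv : (Finset.univ : Finset (Fin (i+1))).card = i + 1 := by simp
    rw [hKcard, huniv]
    have hceil : (1/ε : ℝ) ≤ m := Nat.le_ceil _
    have hdm : (d : ℝ) * m ≤ i := by exact_mod_cast h5
    have h1m : (1:ℝ) ≤ m * ε := (div_le_iff₀ hε).1 hceil
    have hdε : (d : ℝ) ≤ ε * i := by
      nlinarith [mul_le_mul_of_nonneg_left h1m (Nat.cast_nonneg (α := ℝ) d),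
        mul_le_mul_of_nonneg_left hdm hε.le]
    have hcast : ((i - d : ℕ) : ℝ) = (i : ℝ) - d := by
      rw [Nat.cast_sub hDi]
    push_cast [hcast]
    nlinarith [Nat.cast_nonneg (α := ℝ) i]
  · -- small dimensions
    intro j
    rw [Stmt9Aux.kronSub_dim]
    have h1 := Stmt9Aux.S1_card_le (i := i) hm0 j
    have h2 := Stmt9Aux.S2_card_le (i := i) hm0 j
    omega
  · -- independence
    intro v
    cases v with
    | false => exact Stmt9Aux.iSupIndep_supp _ (Stmt9Aux.S1_disj)
    | true => exact Stmt9Aux.iSupIndep_supp _ (Stmt9Aux.S2_disj)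
  · -- sup
    intro v
    cases v with
    | false =>
      show (⨆ j, Stmt9Aux.supp (Stmt9Aux.S1 i m (i/m+1) j))
        = Stmt9Aux.supp (Finset.univ.filter fun c : Fin i => (c:ℕ)%m ≠ m-1)
      rw [Stmt9Aux.iSup_supp _ Stmt9Aux.S1_disj, Stmt9Aux.S1_biUnion hm0]
    | true =>
      show (⨆ j, Stmt9Aux.supp (Stmt9Aux.S2 i m (i/m+1) j))
        = Stmt9Aux.supp (Finset.univ : Finset (Fin (i+1)))
      rw [Stmt9Aux.iSup_supp _ Stmt9Aux.S2_disj, Stmt9Aux.S2_biUnion hm0]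
end

section
/- Let k be any field and Q the 2-Kronecker quiver with two vertices 1, 2 and two arrows a, b : 1 → 2. Let n ≥ 1, let C be the companion matrix of a monic polynomial of degree n over k, and let R be the representation with R(1) = R(2) = k^n, where a acts as the identity and b acts as C. Then R has a subrepresentation Y with dim Y = dim R − 1 = 2n − 1 such that Y is isomorphic to the preprojective representation P_{n−1} (where P_i has P_i(1) = k^i, P_i(2) = k^{i+1}, with a acting as [id; 0] and b acting as [0; id]). -/
/-!
Hyperfiniteness for families of finite-dimensional representations of finite quivers,
following Elek.
-/

universe u

variable {k : Type u} [Field k] {Q : FinQuiver}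

/-- The representation induced on a subrepresentation. -/
noncomputable def SubRep.toRep {k : Type u} [Field k] {Q : FinQuiver} {M : QuivRep k Q}
    (Y : SubRep M) : QuivRep k Q where
  space := fun i => ↥(Y.toFun i)
  map := fun a => (M.map a).restrict (Y.compat a)

/-- An isomorphism of representations of `Q`: compatible linear equivalences at
every vertex. -/
structure RepIso {k : Type u} [Field k] {Q : FinQuiver} (M N : QuivRep k Q) where
  equiv : ∀ i : Q.vertex, M.space i ≃ₗ[k] N.space i
  comm : ∀ (a : Q.arrow) (x : M.space (Q.src a)),
    equiv (Q.tgt a) (M.map a x) = N.map a (equiv (Q.src a) x)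

/-- The companion matrix of a (monic) polynomial `p` of degree `n`: it sends the basis
vector `e_j` to `e_{j+1}` for `j < n - 1`, and the last basis vector to minus the vector
of coefficients of `p`. -/
def companionMatrix {k : Type u} [Field k] (n : ℕ) (p : Polynomial k) :
    Matrix (Fin n) (Fin n) k :=
  Matrix.of fun r c =>
    if (c : ℕ) + 1 < n then (if (r : ℕ) = (c : ℕ) + 1 then 1 else 0) else -p.coeff (r : ℕ)

noncomputable def truncEquiv (k : Type u) [Field k] (m : ℕ) :
    ↥(LinearMap.ker (LinearMap.proj (R := k) (φ := fun _ : Fin (m+1) => k) (Fin.last m))) ≃ₗ[k]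
      (Fin m → k) where
  toFun x := fun i => x.1 i.castSucc
  map_add' x y := rfl
  map_smul' c x := rfl
  invFun y := ⟨Fin.snoc y 0, by simp [LinearMap.mem_ker]⟩
  left_inv x := Subtype.ext (funext fun j => by
    refine Fin.lastCases ?_ (fun i => ?_) j
    · have hx : x.1 (Fin.last m) = 0 := x.2
      simp [hx]
    · simp)
  right_inv y := funext fun i => by simp

/-- let `R` be the regular representation of the 2-Kronecker quiver with
`R(1) = R(2) = k^n`, where `a` acts as the identity and `b` acts as the companion matrix
of a monic polynomial of degree `n ≥ 1`. Then `R` has a subrepresentation `Y` of dimension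
`2n - 1` isomorphic to the preprojective representation `P_{n-1}`. -/
theorem stmt_10 {k : Type u} [Field k] (n : ℕ) (hn : 1 ≤ n)
    (p : Polynomial k) (hmonic : p.Monic) (hdeg : p.natDegree = n) :
    ∃ Y : SubRep (kronRep k n n (1 : Matrix (Fin n) (Fin n) k) (companionMatrix n p)),
      Y.dim = 2 * n - 1 ∧ Nonempty (RepIso Y.toRep (kronP k (n - 1))) := by
  obtain ⟨m, rfl⟩ : ∃ m, n = m + 1 := ⟨n - 1, (Nat.succ_pred_eq_of_pos hn).symm⟩
  classical
  set π : (Fin (m+1) → k) →ₗ[k] k :=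
    LinearMap.proj (R := k) (φ := fun _ : Fin (m+1) => k) (Fin.last m) with hπ
  letI : ∀ i, AddCommGroup ((kronRep k (m+1) (m+1) 1 (companionMatrix (m+1) p)).space i) :=
    fun i => QuivRep.acg _ i
  letI : ∀ i, Module k ((kronRep k (m+1) (m+1) 1 (companionMatrix (m+1) p)).space i) :=
    fun i => QuivRep.mod _ i
  letI : ∀ i : Bool, AddCommGroup ((kronRep k (m+1) (m+1) 1 (companionMatrix (m+1) p)).space i) :=
    fun i => QuivRep.acg (kronRep k (m+1) (m+1) 1 (companionMatrix (m+1) p)) i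
  letI : ∀ i : Bool, Module k ((kronRep k (m+1) (m+1) 1 (companionMatrix (m+1) p)).space i) :=
    fun i => QuivRep.mod (kronRep k (m+1) (m+1) 1 (companionMatrix (m+1) p)) i
  refine ⟨⟨fun i => match i with
      | false => LinearMap.ker π
      | true => ⊤, ?_⟩, ?_, ?_⟩
  · intro a x _
    exact trivial
  · have h1 : Module.finrank k ↥(LinearMap.ker π) = m :=
      (truncEquiv k m).finrank_eq.trans (by simp)
    have h2 : Module.finrank k (↥(⊤ : Submodule k (Fin (m+1) → k))) = m + 1 := by
      simp
    simp only [SubRep.dim, Fintype.sum_bool]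
    show Module.finrank k (↥(⊤ : Submodule k (Fin (m+1) → k)))
        + Module.finrank k ↥(LinearMap.ker π) = 2 * (m + 1) - 1
    rw [h1, h2]; omega
  · refine ⟨⟨fun i => match i with
      | false => truncEquiv k m
      | true => Submodule.topEquiv, ?_⟩⟩
    intro a x
    cases a with
    | false =>
        change ↥(LinearMap.ker π) at x
        show (Matrix.toLin' (1 : Matrix (Fin (m+1)) (Fin (m+1)) k)) x.1 =
          Matrix.toLin' (idZeroMat k m) (fun i => x.1 i.castSucc)
        funext r
        rw [Matrix.toLin'_apply, Matrix.toLin'_apply, Matrix.one_mulVec]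
        simp only [Matrix.mulVec, dotProduct, idZeroMat, Matrix.of_apply, ite_mul,
          one_mul, zero_mul]
        refine Fin.lastCases ?_ (fun i => ?_) r
        · have hx : x.1 (Fin.last m) = 0 := x.2
          rw [hx]
          exact (Finset.sum_eq_zero fun c _ => by
            simp [Fin.val_last, (c.is_lt).ne']).symm
        · rw [Finset.sum_eq_single i (fun c _ hc => by
            have : (i : ℕ) ≠ (c : ℕ) := fun h => hc (Fin.ext h.symm)
            simp [this]) (by simp)]
          simp
    | true =>
        show (Matrix.toLin' (companionMatrix (m+1) p)) x.1 =
          Matrix.toLin' (zeroIdMat k m) (fun i => x.1 i.castSucc)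
        funext r
        change (companionMatrix (m+1) p).mulVec x.1 r = _
        simp only [Matrix.mulVec, dotProduct]
        rw [Fin.sum_univ_castSucc]
        have hx : x.1 (Fin.last m) = 0 := x.2
        rw [hx, mul_zero, add_zero]
        refine Finset.sum_congr rfl fun j _ => ?_
        have hj : (j : ℕ) + 1 < m + 1 := Nat.succ_lt_succ j.is_lt
        simp [companionMatrix, zeroIdMat, hj]
end

section
/- Let k be any field and Q the 2-Kronecker quiver with two vertices 1, 2 and two arrows a, b : 1 → 2. Consider the family R of all representations R_n(φ, ψ) with R_n(1) = R_n(2) = k^n (n ≥ 1), where a acts as φ and b acts as ψ, and where either φ is the identity and ψ is the companion matrix of a power of a monic irreducible polynomial over k, or ψ is the identity and φ is the companion matrix of a polynomial of the form λ^m. Then R is hyperfinite. -/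
/-!
Hyperfiniteness for families of finite-dimensional representations of finite quivers,
following Elek.
-/

universe u

variable {k : Type u} [Field k] {Q : FinQuiver}

/-- The submodule of vectors supported on a set of coordinates. -/
def stdSub (k : Type u) [Field k] {n : ℕ} (S : Set (Fin n)) : Submodule k (Fin n → k) where
  carrier := {v | ∀ j, j ∉ S → v j = 0}
  add_mem' := by intro x y hx hy j hj; simp [hx j hj, hy j hj]
  zero_mem' := by intro j hj; rfl
  smul_mem' := by intro c x hx j hj; simp [hx j hj]

lemma mem_stdSub {n : ℕ} {S : Set (Fin n)} {v : Fin n → k} :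
    v ∈ stdSub k S ↔ ∀ j, j ∉ S → v j = 0 := Iff.rfl

lemma stdSub_mono {n : ℕ} {S T : Set (Fin n)} (h : S ⊆ T) : stdSub k S ≤ stdSub k T := by
  intro v hv j hj
  exact hv j (fun hjS => hj (h hjS))

lemma stdSub_univ {n : ℕ} : stdSub k (Set.univ : Set (Fin n)) = ⊤ := by
  ext v; simp [mem_stdSub]

lemma finrank_stdSub {n : ℕ} (F : Finset (Fin n)) :
    Module.finrank k (stdSub k (↑F : Set (Fin n))) = F.card := by
  classical
  let e : stdSub k (↑F : Set (Fin n)) →ₗ[k] ({ x : Fin n // x ∈ F } → k) :=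
    { toFun := fun v j => v.1 j
      map_add' := by intros; rfl
      map_smul' := by intros; rfl }
  have hbij : Function.Bijective e := by
    constructor
    · intro v w h
      ext j
      by_cases hj : j ∈ F
      · exact congrFun h ⟨j, hj⟩
      · rw [v.2 j (by simpa using hj), w.2 j (by simpa using hj)]
    · intro w
      refine ⟨⟨fun j => if h : j ∈ F then w ⟨j, h⟩ else 0, ?_⟩, ?_⟩
      · intro j hj; simp [Finset.mem_coe] at hj; simp [hj]
      · ext j; simp [e, j.2]
  rw [(LinearEquiv.ofBijective e hbij).finrank_eq, Module.finrank_fintype_fun_eq_card]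
  simp

lemma stdSub_disjoint_aux {n : ℕ} {S T : Set (Fin n)} (h : ∀ j, j ∈ S → j ∉ T) :
    Disjoint (stdSub k S) (stdSub k T) := by
  rw [Submodule.disjoint_def]
  intro v hvS hvT
  ext j
  by_cases hj : j ∈ S
  · exact hvT j (h j hj)
  · exact hvS j hj

lemma stdSub_iSupIndep {n t : ℕ} (S : Fin t → Set (Fin n))
    (hdis : ∀ b b', b ≠ b' → ∀ j, j ∈ S b → j ∉ S b') :
    iSupIndep fun b => stdSub k (S b) := by
  intro b
  have h1 : (⨆ (j) (_ : j ≠ b), stdSub k (S j)) ≤ stdSub k (⋃ (j) (_ : j ≠ b), S j) := by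
    refine iSup_le fun j => iSup_le fun hj => stdSub_mono ?_
    exact Set.subset_iUnion₂ (s := fun j (_ : j ≠ b) => S j) j hj
  refine Disjoint.mono_right h1 (stdSub_disjoint_aux ?_)
  intro j hj hU
  rcases Set.mem_iUnion₂.mp hU with ⟨b', hb', hjb'⟩
  exact hdis b' b hb' j hjb' hj

lemma stdSub_iSup {n t : ℕ} (S : Fin t → Set (Fin n)) (T : Set (Fin n))
    (hsub : ∀ b, S b ⊆ T) (hcov : ∀ j, j ∈ T → ∃ b, j ∈ S b)
    (hdis : ∀ b b', b ≠ b' → ∀ j, j ∈ S b → j ∉ S b') :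
    (⨆ b, stdSub k (S b)) = stdSub k T := by
  classical
  apply le_antisymm
  · exact iSup_le fun b => stdSub_mono (hsub b)
  · intro v hv
    have hveq : v = ∑ b : Fin t, (fun j => if j ∈ S b then v j else 0) := by
      funext j
      rw [Finset.sum_apply]
      by_cases hjT : j ∈ T
      · obtain ⟨b, hb⟩ := hcov j hjT
        rw [Finset.sum_eq_single_of_mem b (Finset.mem_univ b)]
        · simp [hb]
        · intro b' _ hb'
          simp [hdis b b' (fun h => hb' (h ▸ rfl)) j hb]
      · have : v j = 0 := hv j hjT
        simp [this]
    rw [hveq]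
    refine Submodule.sum_mem _ fun b _ => ?_
    refine Submodule.mem_iSup_of_mem b ?_
    intro j hj
    simp [hj]

/-- Indices kept at vertex 1 within block `b`. -/
def kblkF (n ℓ b : ℕ) : Finset (Fin n) :=
  Finset.univ.filter fun j => (j : ℕ) / ℓ = b ∧ (j : ℕ) % ℓ ≠ ℓ - 1 ∧ (j : ℕ) ≠ n - 1

/-- Indices of block `b` at vertex 2. -/
def blkF (n ℓ b : ℕ) : Finset (Fin n) :=
  Finset.univ.filter fun j => (j : ℕ) / ℓ = b

/-- Indices kept at vertex 1. -/
def keepF (n ℓ : ℕ) : Finset (Fin n) :=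
  Finset.univ.filter fun j => (j : ℕ) % ℓ ≠ ℓ - 1 ∧ (j : ℕ) ≠ n - 1

lemma div_succ_eq {j ℓ : ℕ} (h : j % ℓ + 1 < ℓ) : (j + 1) / ℓ = j / ℓ := by
  have hℓ : 0 < ℓ := by omega
  have hj : j + 1 = ℓ * (j / ℓ) + (j % ℓ + 1) := by
    have := Nat.div_add_mod j ℓ; omega
  rw [hj, Nat.mul_add_div hℓ, Nat.div_eq_of_lt h]
  omega

lemma card_blkF_le {n ℓ b : ℕ} (hℓ : 0 < ℓ) : (blkF n ℓ b).card ≤ ℓ := by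
  have h : (blkF n ℓ b).card ≤ (Finset.range ℓ).card := by
    apply Finset.card_le_card_of_injOn (fun j : Fin n => (j : ℕ) % ℓ)
    · intro a _
      exact Finset.mem_range.mpr (Nat.mod_lt _ hℓ)
    · intro a ha b' hb' hab
      simp only [blkF, Finset.mem_coe, Finset.mem_filter, Finset.mem_univ, true_and] at ha hb'
      have hab' : (a : ℕ) % ℓ = (b' : ℕ) % ℓ := hab
      refine Fin.ext ?_
      rw [← Nat.div_add_mod (a : ℕ) ℓ, ← Nat.div_add_mod (b' : ℕ) ℓ, ha, hb', hab']
  simpa using h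

lemma card_blkF_mod_le {n ℓ : ℕ} (hℓ : 0 < ℓ) :
    (Finset.univ.filter fun j : Fin n => (j : ℕ) % ℓ = ℓ - 1).card ≤ n / ℓ + 1 := by
  have h : (Finset.univ.filter fun j : Fin n => (j : ℕ) % ℓ = ℓ - 1).card
      ≤ (Finset.range (n / ℓ + 1)).card := by
    apply Finset.card_le_card_of_injOn (fun j : Fin n => (j : ℕ) / ℓ)
    · intro a _
      refine Finset.mem_range.mpr ?_
      show (a : ℕ) / ℓ < n / ℓ + 1
      have : (a : ℕ) / ℓ ≤ n / ℓ := Nat.div_le_div_right (le_of_lt a.2)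
      omega
    · intro a ha b' hb' hab
      simp only [Finset.mem_coe, Finset.mem_filter, Finset.mem_univ, true_and] at ha hb'
      have hab' : (a : ℕ) / ℓ = (b' : ℕ) / ℓ := hab
      refine Fin.ext ?_
      rw [← Nat.div_add_mod (a : ℕ) ℓ, ← Nat.div_add_mod (b' : ℕ) ℓ, ha, hb', hab']
  simpa using h

lemma card_keepF_ge {n ℓ : ℕ} (hℓ : 0 < ℓ) :
    n ≤ (keepF n ℓ).card + (n / ℓ + 2) := by
  classical
  have hsplit :
      (keepF n ℓ).card +
        (Finset.univ.filter fun j : Fin n =>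
          ¬((j : ℕ) % ℓ ≠ ℓ - 1 ∧ (j : ℕ) ≠ n - 1)).card = n := by
    rw [keepF, Finset.card_filter_add_card_filter_not]
    simp
  have hsub : (Finset.univ.filter fun j : Fin n =>
      ¬((j : ℕ) % ℓ ≠ ℓ - 1 ∧ (j : ℕ) ≠ n - 1)) ⊆
      (Finset.univ.filter fun j : Fin n => (j : ℕ) % ℓ = ℓ - 1) ∪
      (Finset.univ.filter fun j : Fin n => (j : ℕ) = n - 1) := by
    intro j hj
    simp only [Finset.mem_filter, Finset.mem_univ, true_and, Finset.mem_union] at hj ⊢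
    tauto
  have hcard1 := card_blkF_mod_le (n := n) hℓ
  have hcard2 : (Finset.univ.filter fun j : Fin n => (j : ℕ) = n - 1).card ≤ 1 := by
    refine Finset.card_le_one.mpr ?_
    intro a ha b hb
    simp only [Finset.mem_filter] at ha hb
    exact Fin.ext (by omega)
  have := Finset.card_union_le
    (Finset.univ.filter fun j : Fin n => (j : ℕ) % ℓ = ℓ - 1)
    (Finset.univ.filter fun j : Fin n => (j : ℕ) = n - 1)
  have := Finset.card_le_card hsub
  omega

lemma mulVec_one_mem {n : ℕ} {S T : Set (Fin n)} (h : S ⊆ T) {v : Fin n → k}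
    (hv : v ∈ stdSub k S) :
    (1 : Matrix (Fin n) (Fin n) k).mulVec v ∈ stdSub k T := by
  rw [Matrix.one_mulVec]
  exact stdSub_mono h hv

lemma mulVec_companion_mem {n ℓ b : ℕ} (hℓ : 0 < ℓ) (p : Polynomial k) {v : Fin n → k}
    (hv : v ∈ stdSub k (↑(kblkF n ℓ b) : Set (Fin n))) :
    (companionMatrix n p).mulVec v ∈ stdSub k (↑(blkF n ℓ b) : Set (Fin n)) := by
  intro j' hj'
  have hsum : (companionMatrix n p).mulVec v j'
      = ∑ j, companionMatrix n p j' j * v j := rfl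
  rw [hsum]
  refine Finset.sum_eq_zero fun j _ => ?_
  by_cases hvj : v j = 0
  · simp [hvj]
  · have hjmem : j ∈ kblkF n ℓ b := by
      by_contra hc
      exact hvj (hv j (by simpa using hc))
    simp only [kblkF, Finset.mem_filter, Finset.mem_univ, true_and] at hjmem
    obtain ⟨hdiv, hmod, hne⟩ := hjmem
    have hj1 : (j : ℕ) + 1 < n := by have := j.2; omega
    have hentry : companionMatrix n p j' j
        = if (j' : ℕ) = (j : ℕ) + 1 then 1 else 0 := by
      simp [companionMatrix, hj1]
    rw [hentry]
    by_cases hj'' : (j' : ℕ) = (j : ℕ) + 1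
    · exfalso
      apply hj'
      have hmodlt : (j : ℕ) % ℓ + 1 < ℓ := by
        have := Nat.mod_lt (j : ℕ) hℓ
        omega
      have : (j' : ℕ) / ℓ = b := by
        rw [hj'', div_succ_eq hmodlt, hdiv]
      simp [blkF, this]
    · simp [hj'']

lemma stdSub_coe_univ {n : ℕ} :
    stdSub k (↑(Finset.univ : Finset (Fin n)) : Set (Fin n)) = ⊤ := by
  rw [Finset.coe_univ, stdSub_univ]

lemma mem_stdSub_coe_univ {n : ℕ} (v : Fin n → k) :
    v ∈ stdSub k (↑(Finset.univ : Finset (Fin n)) : Set (Fin n)) := by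
  rw [stdSub_coe_univ]; trivial

/-- Build a subrepresentation of `kronRep` from coordinate subspaces. -/
def kronSub {n : ℕ} (A B : Matrix (Fin n) (Fin n) k) (S₁ S₂ : Set (Fin n))
    (hA : ∀ v ∈ stdSub k S₁, A.mulVec v ∈ stdSub k S₂)
    (hB : ∀ v ∈ stdSub k S₁, B.mulVec v ∈ stdSub k S₂) :
    SubRep (kronRep k n n A B) where
  toFun := fun i => match i with
    | false => stdSub k S₁
    | true => stdSub k S₂
  compat := by
    intro a x hx
    cases a
    · show Matrix.toLin' A x ∈ stdSub k S₂
      exact hA x hx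
    · show Matrix.toLin' B x ∈ stdSub k S₂
      exact hB x hx

lemma kronSub_dim {n : ℕ} (A B : Matrix (Fin n) (Fin n) k) (F₁ F₂ : Finset (Fin n))
    (hA : ∀ v ∈ stdSub k (↑F₁ : Set (Fin n)), A.mulVec v ∈ stdSub k (↑F₂ : Set (Fin n)))
    (hB : ∀ v ∈ stdSub k (↑F₁ : Set (Fin n)), B.mulVec v ∈ stdSub k (↑F₂ : Set (Fin n))) :
    (kronSub A B ↑F₁ ↑F₂ hA hB).dim = F₂.card + F₁.card := by
  show ∑ i : Bool, Module.finrank k ((kronSub A B (↑F₁ : Set (Fin n)) ↑F₂ hA hB).toFun i)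
      = F₂.card + F₁.card
  rw [Fintype.sum_bool]
  show Module.finrank k (stdSub k (↑F₂ : Set (Fin n)))
      + Module.finrank k (stdSub k (↑F₁ : Set (Fin n))) = F₂.card + F₁.card
  rw [finrank_stdSub, finrank_stdSub]

lemma kronRep_dim {n : ℕ} (A B : Matrix (Fin n) (Fin n) k) :
    (kronRep k n n A B).dim = n + n := by
  unfold QuivRep.dim
  erw [Fintype.sum_bool]
  show Module.finrank k (Fin n → k) + Module.finrank k (Fin n → k) = n + n
  rw [Module.finrank_fin_fun]

lemma iSupIndep_fin_one {α : Type*} [CompleteLattice α] (f : Fin 1 → α) : iSupIndep f := by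
  intro b
  have h : (⨆ (j) (_ : j ≠ b), f j) = ⊥ := by
    apply le_bot_iff.mp
    exact iSup_le fun j => iSup_le fun hj => absurd (Subsingleton.elim j b) hj
  rw [h]
  exact disjoint_bot_right

lemma kron_main {n ℓ : ℕ} (hn : 1 ≤ n) (hℓ : 1 ≤ ℓ) (A B : Matrix (Fin n) (Fin n) k)
    (hAB : (A = 1 ∧ ∃ p, B = companionMatrix n p)
      ∨ (B = 1 ∧ ∃ p, A = companionMatrix n p)) :
    ∃ P : SubRep (kronRep k n n A B),
      n + (keepF n ℓ).card ≤ P.dim ∧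
      ∃ N : Fin (n / ℓ + 1) → SubRep (kronRep k n n A B),
        (∀ j, (N j).dim ≤ 2 * ℓ) ∧
        (∀ i, iSupIndep fun j => (N j).toFun i) ∧
        (∀ i, (⨆ j, (N j).toFun i) = P.toFun i) := by
  classical
  -- compatibility of the two matrices with block subspaces
  have hkb : ∀ b : ℕ, (↑(kblkF n ℓ b) : Set (Fin n)) ⊆ ↑(blkF n ℓ b) := by
    intro b j hj
    simp only [kblkF, blkF, Finset.mem_coe, Finset.mem_filter, Finset.mem_univ,
      true_and] at hj ⊢
    exact hj.1
  have hcompat : ∀ b : ℕ, ∀ v ∈ stdSub k (↑(kblkF n ℓ b) : Set (Fin n)),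
      A.mulVec v ∈ stdSub k (↑(blkF n ℓ b) : Set (Fin n)) ∧
      B.mulVec v ∈ stdSub k (↑(blkF n ℓ b) : Set (Fin n)) := by
    intro b v hv
    rcases hAB with ⟨hA1, p, hBc⟩ | ⟨hB1, p, hAc⟩
    · exact ⟨hA1 ▸ mulVec_one_mem (hkb b) hv, hBc ▸ mulVec_companion_mem hℓ p hv⟩
    · exact ⟨hAc ▸ mulVec_companion_mem hℓ p hv, hB1 ▸ mulVec_one_mem (hkb b) hv⟩
  have hcompatP : ∀ v ∈ stdSub k (↑(keepF n ℓ) : Set (Fin n)),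
      A.mulVec v ∈ stdSub k (↑(Finset.univ : Finset (Fin n)) : Set (Fin n)) ∧
      B.mulVec v ∈ stdSub k (↑(Finset.univ : Finset (Fin n)) : Set (Fin n)) :=
    fun v _ => ⟨mem_stdSub_coe_univ _, mem_stdSub_coe_univ _⟩
  refine ⟨kronSub A B _ _ (fun v hv => (hcompatP v hv).1) (fun v hv => (hcompatP v hv).2),
    ?_, ?_⟩
  · rw [kronSub_dim]
    simp
  · refine ⟨fun b => kronSub A B (↑(kblkF n ℓ (b : ℕ))) (↑(blkF n ℓ (b : ℕ)))
      (fun v hv => (hcompat (b : ℕ) v hv).1) (fun v hv => (hcompat (b : ℕ) v hv).2),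
      ?_, ?_, ?_⟩
    · intro b
      rw [kronSub_dim]
      have h1 : (blkF n ℓ (b : ℕ)).card ≤ ℓ := card_blkF_le hℓ
      have h2 : (kblkF n ℓ (b : ℕ)).card ≤ (blkF n ℓ (b : ℕ)).card :=
        Finset.card_le_card (by
          intro j hj
          simp only [kblkF, blkF, Finset.mem_filter, Finset.mem_univ, true_and] at hj ⊢
          exact hj.1)
      omega
    · -- independence
      have hdis1 : ∀ b b' : Fin (n / ℓ + 1), b ≠ b' → ∀ j : Fin n,
          j ∈ (↑(blkF n ℓ (b : ℕ)) : Set (Fin n)) →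
          j ∉ (↑(blkF n ℓ (b' : ℕ)) : Set (Fin n)) := by
        intro b b' hbb j hj hj'
        simp only [blkF, Finset.mem_coe, Finset.mem_filter, Finset.mem_univ,
          true_and] at hj hj'
        exact hbb (Fin.ext (by omega))
      intro i
      cases i
      · exact stdSub_iSupIndep _ (fun b b' hbb j hj hj' =>
          hdis1 b b' hbb j (hkb _ hj) (hkb _ hj'))
      · exact stdSub_iSupIndep _ hdis1
    · -- suprema
      intro i
      cases i
      · refine stdSub_iSup _ _ ?_ ?_ ?_
        · intro b j hj
          simp only [kblkF, keepF, Finset.mem_coe, Finset.mem_filter, Finset.mem_univ,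
            true_and] at hj ⊢
          exact hj.2
        · intro j hj
          simp only [keepF, Finset.mem_coe, Finset.mem_filter, Finset.mem_univ,
            true_and] at hj
          have hlt : (j : ℕ) / ℓ < n / ℓ + 1 := by
            have : (j : ℕ) / ℓ ≤ n / ℓ := Nat.div_le_div_right (le_of_lt j.2)
            omega
          refine ⟨⟨(j : ℕ) / ℓ, hlt⟩, ?_⟩
          simp only [kblkF, Finset.mem_coe, Finset.mem_filter, Finset.mem_univ, true_and]
          exact hj
        · intro b b' hbb j hj hj'
          simp only [kblkF, Finset.mem_coe, Finset.mem_filter, Finset.mem_univ,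
            true_and] at hj hj'
          exact hbb (Fin.ext (by omega))
      · refine stdSub_iSup _ _ ?_ ?_ ?_
        · intro b j _
          simp
        · intro j _
          have hlt : (j : ℕ) / ℓ < n / ℓ + 1 := by
            have : (j : ℕ) / ℓ ≤ n / ℓ := Nat.div_le_div_right (le_of_lt j.2)
            omega
          refine ⟨⟨(j : ℕ) / ℓ, hlt⟩, ?_⟩
          simp [blkF]
        · intro b b' hbb j hj hj'
          simp only [blkF, Finset.mem_coe, Finset.mem_filter, Finset.mem_univ,
            true_and] at hj hj'
          exact hbb (Fin.ext (by omega))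

lemma kron_eps (ε : ℝ) (hε : 0 < ε) {n : ℕ} (hn : 1 ≤ n) (A B : Matrix (Fin n) (Fin n) k)
    (hAB : (A = 1 ∧ ∃ p, B = companionMatrix n p)
      ∨ (B = 1 ∧ ∃ p, A = companionMatrix n p)) :
    ∃ P : SubRep (kronRep k n n A B),
      (1 - ε) * ((kronRep k n n A B).dim : ℝ) ≤ (P.dim : ℝ) ∧
      ∃ (t : ℕ) (N : Fin t → SubRep (kronRep k n n A B)),
        (∀ j, (N j).dim ≤ 2 * (⌈1/ε⌉₊ + 1) + 2 * (⌈2/ε⌉₊ + 1)) ∧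
        (∀ i, iSupIndep fun j => (N j).toFun i) ∧
        (∀ i, (⨆ j, (N j).toFun i) = P.toFun i) := by
  classical
  set ℓ : ℕ := ⌈1/ε⌉₊ + 1 with hℓdef
  set N₀ : ℕ := ⌈2/ε⌉₊ + 1 with hN₀def
  have hℓ1 : 1 ≤ ℓ := by omega
  have hdim : (kronRep k n n A B).dim = n + n := kronRep_dim A B
  by_cases hsmall : n ≤ N₀
  · -- take the whole representation as one block
    refine ⟨kronSub A B ↑(Finset.univ : Finset (Fin n)) ↑(Finset.univ : Finset (Fin n))
      (fun v _ => mem_stdSub_coe_univ _) (fun v _ => mem_stdSub_coe_univ _), ?_, ?_⟩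
    · rw [hdim, kronSub_dim]
      simp only [Finset.card_univ, Fintype.card_fin]
      have h0 : (0:ℝ) ≤ ((n + n : ℕ) : ℝ) := by positivity
      nlinarith
    · refine ⟨1, fun _ => kronSub A B ↑(Finset.univ : Finset (Fin n))
        ↑(Finset.univ : Finset (Fin n))
        (fun v _ => mem_stdSub_coe_univ _) (fun v _ => mem_stdSub_coe_univ _), ?_, ?_, ?_⟩
      · intro j
        rw [kronSub_dim]
        simp only [Finset.card_univ, Fintype.card_fin]
        omega
      · intro i
        exact iSupIndep_fin_one _
      · intro i
        exact iSup_const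
  · push_neg at hsmall
    obtain ⟨P, hPdim, N, hNdim, hind, hsup⟩ := kron_main hn hℓ1 A B hAB
    refine ⟨P, ?_, n / ℓ + 1, N, fun j => le_trans (hNdim j) (by omega), hind, hsup⟩
    rw [hdim]
    have hkeep := card_keepF_ge (n := n) (show 0 < ℓ by omega)
    have hP : ((n + (keepF n ℓ).card : ℕ) : ℝ) ≤ (P.dim : ℝ) := by exact_mod_cast hPdim
    have hkeep' : ((n : ℕ) : ℝ) ≤ ((keepF n ℓ).card : ℝ) + ((n / ℓ : ℕ) : ℝ) + 2 := by
      exact_mod_cast hkeep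
    have hℓpos : (0:ℝ) < (ℓ : ℝ) := by exact_mod_cast hℓ1
    have h2 : (1:ℝ)/ε ≤ (ℓ : ℝ) := by
      refine le_trans (Nat.le_ceil _) ?_
      rw [hℓdef]
      push_cast
      linarith
    have hdivle : ((n / ℓ : ℕ) : ℝ) ≤ (n : ℝ) / (ℓ : ℝ) := Nat.cast_div_le
    have hεℓ : (1:ℝ) ≤ ε * ℓ := by
      rw [div_le_iff₀ hε] at h2
      linarith
    have hnd : (n : ℝ) / (ℓ : ℝ) ≤ ε * n := by
      rw [div_le_iff₀ hℓpos]
      have hn0 : (0:ℝ) ≤ (n:ℝ) := by positivity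
      nlinarith
    have hN₀n : (N₀ : ℝ) ≤ (n : ℝ) := by exact_mod_cast le_of_lt hsmall
    have h2εn : (2:ℝ) ≤ ε * n := by
      have h2N : (2:ℝ)/ε ≤ (N₀ : ℝ) := by
        refine le_trans (Nat.le_ceil _) ?_
        rw [hN₀def]
        push_cast
        linarith
      rw [div_le_iff₀ hε] at h2N
      nlinarith
    push_cast at hP hkeep' ⊢
    nlinarith

/-- the family of all indecomposable regular representations
`R_n(φ, ψ)` of the 2-Kronecker quiver — with `R_n(1) = R_n(2) = k^n`, `a` acting as `φ`
and `b` acting as `ψ`, where either `φ = id` and `ψ` is the companion matrix of a power of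
a monic irreducible polynomial, or `ψ = id` and `φ` is the companion matrix of a
polynomial `λ^m` — is hyperfinite, over any field. -/
theorem stmt_11 {k : Type u} [Field k] :
    QuivRepHyperfinite {M : QuivRep k Kronecker | ∃ n : ℕ, 1 ≤ n ∧
      ((∃ q : Polynomial k, q.Monic ∧ Irreducible q ∧ ∃ m : ℕ,
          (q ^ m).natDegree = n ∧ M = kronRep k n n 1 (companionMatrix n (q ^ m)))
        ∨ M = kronRep k n n (companionMatrix n (Polynomial.X ^ n)) 1)} := by
  intro ε hε
  refine ⟨2 * (⌈1/ε⌉₊ + 1) + 2 * (⌈2/ε⌉₊ + 1), by omega, ?_⟩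
  rintro M ⟨n, hn, hcase⟩
  rcases hcase with ⟨q, _, _, m, _, hM⟩ | hM
  · subst hM
    exact kron_eps ε hε hn _ _ (Or.inl ⟨rfl, q ^ m, rfl⟩)
  · subst hM
    exact kron_eps ε hε hn _ _ (Or.inr ⟨rfl, Polynomial.X ^ n, rfl⟩)
end

section
/- Let k be any field and Q the 2-Kronecker quiver with two vertices 1, 2 and two arrows a, b : 1 → 2. For i ≥ 0 let Q_i denote the representation with Q_i(1) = k^{i+1}, Q_i(2) = k^i, where a acts as the matrix [id 0] (the i×i identity followed by a zero column block) and b acts as [0 id] (a zero column block followed by the i×i identity). Then the family {Q_i : i ≥ 0} of representations of Q is hyperfinite. -/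
/-!
Hyperfiniteness for families of finite-dimensional representations of finite quivers,
following Elek.
-/

universe u

variable {k : Type u} [Field k] {Q : FinQuiver}

/-- The matrix `[id 0]` : the `i × i` identity followed by a zero column block. -/
def idZeroColMat (k : Type u) [Field k] (i : ℕ) : Matrix (Fin i) (Fin (i + 1)) k :=
  Matrix.of fun r c => if (r : ℕ) = (c : ℕ) then 1 else 0

/-- The matrix `[0 id]` : a zero column block followed by the `i × i` identity. -/
def zeroIdColMat (k : Type u) [Field k] (i : ℕ) : Matrix (Fin i) (Fin (i + 1)) k :=
  Matrix.of fun r c => if (r : ℕ) + 1 = (c : ℕ) then 1 else 0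

/-- The indecomposable preinjective representation `Q_i` of the 2-Kronecker quiver:
`Q_i(1) = k^{i+1}`, `Q_i(2) = k^i`, `a` acts as `[id 0]` and `b` acts as `[0 id]`. -/
noncomputable def kronQ (k : Type u) [Field k] (i : ℕ) : QuivRep k Kronecker :=
  kronRep k (i + 1) i (idZeroColMat k i) (zeroIdColMat k i)


namespace Stmt12Aux

open Module Finset

variable {k : Type u} [Field k]

/-- The coordinate subspace of `Fin n → k` supported on `s`. -/
def coordSub (k : Type u) [Field k] {n : ℕ} (s : Finset (Fin n)) :
    Submodule k (Fin n → k) where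
  carrier := {x | ∀ c ∉ s, x c = 0}
  add_mem' := fun hx hy c hc => by simp [hx c hc, hy c hc]
  zero_mem' := fun c _ => rfl
  smul_mem' := fun a y hy c hc => by simp [hy c hc]

lemma mem_coordSub {n : ℕ} {s : Finset (Fin n)} {x : Fin n → k} :
    x ∈ coordSub k s ↔ ∀ c ∉ s, x c = 0 := Iff.rfl

lemma coordSub_mono {n : ℕ} {s t : Finset (Fin n)} (h : s ⊆ t) :
    coordSub k s ≤ coordSub k t :=
  fun _ hx c hc => hx c fun hcs => hc (h hcs)

def extMap {n : ℕ} (s : Finset (Fin n)) : (s → k) →ₗ[k] (Fin n → k) where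
  toFun x c := if h : c ∈ s then x ⟨c, h⟩ else 0
  map_add' x y := by funext c; by_cases h : c ∈ s <;> simp [h]
  map_smul' a x := by funext c; by_cases h : c ∈ s <;> simp [h]

lemma extMap_injective {n : ℕ} (s : Finset (Fin n)) :
    Function.Injective (extMap (k := k) s) := by
  intro x y h
  funext c
  have := congrFun h (c : Fin n)
  simpa [extMap, c.2] using this

lemma range_extMap {n : ℕ} (s : Finset (Fin n)) :
    LinearMap.range (extMap (k := k) s) = coordSub k s := by
  ext x
  constructor
  · rintro ⟨y, rfl⟩ c hc
    simp [extMap, hc]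
  · intro hx
    refine ⟨fun c => x c, ?_⟩
    funext c
    by_cases h : c ∈ s
    · simp [extMap, h]
    · simp only [extMap, LinearMap.coe_mk, AddHom.coe_mk, dif_neg h]
      exact (hx c h).symm

lemma finrank_coordSub {n : ℕ} (s : Finset (Fin n)) :
    finrank k (coordSub k s) = s.card := by
  rw [← range_extMap]
  rw [← LinearEquiv.finrank_eq (LinearEquiv.ofInjective _ (extMap_injective (k := k) s))]
  rw [Module.finrank_fintype_fun_eq_card, Fintype.card_coe]

lemma iSupIndep_coordSub {n t : ℕ} (f : Fin t → Finset (Fin n))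
    (hd : ∀ j l, j ≠ l → Disjoint (f j) (f l)) :
    iSupIndep fun j => coordSub k (f j) := by
  intro j
  have hle : (⨆ l, ⨆ (_ : l ≠ j), coordSub k (f l)) ≤ coordSub k (f j)ᶜ := by
    refine iSup₂_le fun l hl => coordSub_mono ?_
    intro c hc
    simp only [Finset.mem_compl]
    exact fun hcj => (Finset.disjoint_left.mp (hd l j hl)) hc hcj
  refine Disjoint.mono_right hle ?_
  rw [disjoint_iff]
  ext x
  simp only [Submodule.mem_inf, Submodule.mem_bot]
  constructor
  · rintro ⟨h1, h2⟩
    funext c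
    by_cases hc : c ∈ f j
    · exact h2 c (by simpa using hc)
    · exact h1 c hc
  · rintro rfl
    exact ⟨Submodule.zero_mem _, Submodule.zero_mem _⟩

lemma iSup_coordSub_eq {n t : ℕ} (f : Fin t → Finset (Fin n)) (s : Finset (Fin n))
    (hsub : ∀ j, f j ⊆ s) (hcov : ∀ c ∈ s, ∃ j, c ∈ f j)
    (hd : ∀ j l, j ≠ l → Disjoint (f j) (f l)) :
    (⨆ j, coordSub k (f j)) = coordSub k s := by
  refine le_antisymm (iSup_le fun j => coordSub_mono (hsub j)) ?_
  intro x hx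
  have hxe : x = ∑ j : Fin t, fun c => if c ∈ f j then x c else 0 := by
    funext c
    rw [Finset.sum_apply]
    by_cases hcs : c ∈ s
    · obtain ⟨j0, hj0⟩ := hcov c hcs
      rw [Finset.sum_eq_single j0]
      · simp [hj0]
      · intro l _ hl
        exact if_neg fun hcl => (Finset.disjoint_left.mp (hd l j0 hl)) hcl hj0
      · intro h
        exact absurd (Finset.mem_univ _) h
    · rw [hx c hcs]
      exact (Finset.sum_eq_zero fun l _ => if_neg fun hcl => hcs (hsub l hcl)).symm
  rw [hxe]
  exact Submodule.sum_mem _ fun j _ =>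
    Submodule.mem_iSup_of_mem j fun c hc => if_neg hc

lemma succ_div_of_mod_ne {m : ℕ} (r : ℕ) (hm : 0 < m) (h : r % m ≠ m - 1) :
    (r + 1) / m = r / m := by
  have h2 : r % m < m := Nat.mod_lt _ hm
  have h4 : r + 1 = m * (r / m) + (r % m + 1) := by
    have := Nat.div_add_mod r m
    omega
  rw [h4, Nat.mul_add_div hm, Nat.div_eq_of_lt (show r % m + 1 < m by omega), add_zero]

lemma mulVec_idZeroColMat {i : ℕ} (x : Fin (i + 1) → k) (r : Fin i) :
    (idZeroColMat k i).mulVec x r = x r.castSucc := by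
  simp only [Matrix.mulVec, dotProduct, idZeroColMat, Matrix.of_apply]
  rw [Finset.sum_eq_single r.castSucc]
  · simp
  · intro c _ hc
    rw [if_neg, zero_mul]
    intro h
    exact hc (Fin.ext h.symm)
  · intro h
    exact absurd (Finset.mem_univ _) h

lemma mulVec_zeroIdColMat {i : ℕ} (x : Fin (i + 1) → k) (r : Fin i) :
    (zeroIdColMat k i).mulVec x r = x r.succ := by
  simp only [Matrix.mulVec, dotProduct, zeroIdColMat, Matrix.of_apply]
  rw [Finset.sum_eq_single r.succ]
  · simp
  · intro c _ hc
    rw [if_neg, zero_mul]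
    intro h
    exact hc (Fin.ext h.symm)
  · intro h
    exact absurd (Finset.mem_univ _) h

def bSet1 (i m j : ℕ) : Finset (Fin (i + 1)) :=
  Finset.univ.filter fun c => c.val / m = j ∧ ¬(c.val % m = m - 1)

def bSet2 (i m j : ℕ) : Finset (Fin i) :=
  Finset.univ.filter fun c => (c.val + 1) / m = j

def pSet1 (i m : ℕ) : Finset (Fin (i + 1)) :=
  Finset.univ.filter fun c => ¬(c.val % m = m - 1)

noncomputable def kronBlock (k : Type u) [Field k] (i m j : ℕ) (hm : 0 < m) :
    SubRep (kronQ k i) where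
  toFun v := match v with
    | false => coordSub k (bSet1 i m j)
    | true => coordSub k (bSet2 i m j)
  compat a x hx := by
    have hx' : ∀ c ∉ bSet1 i m j, x c = 0 := hx
    cases a
    · show Matrix.toLin' (idZeroColMat k i) x ∈ coordSub k (bSet2 i m j)
      rw [mem_coordSub]
      intro r hr
      change (idZeroColMat k i).mulVec x r = 0
      refine (mulVec_idZeroColMat x r).trans ?_
      refine hx' r.castSucc fun hr1 => ?_
      simp only [bSet1, Finset.mem_filter, Finset.mem_univ, true_and,
        Fin.coe_castSucc] at hr1
      simp only [bSet2, Finset.mem_filter, Finset.mem_univ, true_and] at hr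
      exact hr (by rw [succ_div_of_mod_ne r.val hm hr1.2, hr1.1])
    · show Matrix.toLin' (zeroIdColMat k i) x ∈ coordSub k (bSet2 i m j)
      rw [mem_coordSub]
      intro r hr
      change (zeroIdColMat k i).mulVec x r = 0
      refine (mulVec_zeroIdColMat x r).trans ?_
      refine hx' r.succ fun hr1 => ?_
      simp only [bSet1, Finset.mem_filter, Finset.mem_univ, true_and,
        Fin.val_succ] at hr1
      simp only [bSet2, Finset.mem_filter, Finset.mem_univ, true_and] at hr
      exact hr hr1.1

noncomputable def kronP (k : Type u) [Field k] (i m : ℕ) : SubRep (kronQ k i) where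
  toFun v := match v with
    | false => coordSub k (pSet1 i m)
    | true => coordSub k (Finset.univ : Finset (Fin i))
  compat a x _ := by
    cases a
    · show Matrix.toLin' (idZeroColMat k i) x ∈ coordSub k (Finset.univ : Finset (Fin i))
      rw [mem_coordSub]
      intro c hc
      exact absurd (Finset.mem_univ c) hc
    · show Matrix.toLin' (zeroIdColMat k i) x ∈ coordSub k (Finset.univ : Finset (Fin i))
      rw [mem_coordSub]
      intro c hc
      exact absurd (Finset.mem_univ c) hc

lemma card_bSet1_le (i m j : ℕ) (hm : 0 < m) : (bSet1 i m j).card ≤ m := by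
  have := Finset.card_le_card_of_injOn (s := bSet1 i m j) (t := Finset.range m)
    (fun c => c.val % m) ?_ ?_
  · simpa using this
  · intro c _
    simp only [Finset.mem_coe, Finset.mem_range]
    exact Nat.mod_lt _ hm
  · intro c hc c' hc' hcc
    simp only [bSet1, Finset.coe_filter, Set.mem_setOf_eq, Finset.mem_univ,
      true_and] at hc hc'
    have h1 : m * j + c.val % m = c.val := by
      rw [← hc.1]; exact Nat.div_add_mod _ _
    have h2 : m * j + c'.val % m = c'.val := by
      rw [← hc'.1]; exact Nat.div_add_mod _ _
    have hcc' : c.val % m = c'.val % m := hcc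
    exact Fin.ext (by omega)

lemma card_bSet2_le (i m j : ℕ) (hm : 0 < m) : (bSet2 i m j).card ≤ m := by
  have := Finset.card_le_card_of_injOn (s := bSet2 i m j) (t := Finset.range m)
    (fun c => (c.val + 1) % m) ?_ ?_
  · simpa using this
  · intro c _
    simp only [Finset.mem_coe, Finset.mem_range]
    exact Nat.mod_lt _ hm
  · intro c hc c' hc' hcc
    simp only [bSet2, Finset.coe_filter, Set.mem_setOf_eq, Finset.mem_univ,
      true_and] at hc hc'
    have h1 : m * j + (c.val + 1) % m = c.val + 1 := by
      rw [← hc]; exact Nat.div_add_mod _ _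
    have h2 : m * j + (c'.val + 1) % m = c'.val + 1 := by
      rw [← hc']; exact Nat.div_add_mod _ _
    have hcc' : (c.val + 1) % m = (c'.val + 1) % m := hcc
    exact Fin.ext (by omega)

lemma card_modSet_le (i m : ℕ) (hm : 0 < m) :
    (Finset.univ.filter fun c : Fin (i + 1) => c.val % m = m - 1).card ≤ (i + 1) / m := by
  have := Finset.card_le_card_of_injOn
    (s := Finset.univ.filter fun c : Fin (i + 1) => c.val % m = m - 1)
    (t := Finset.range ((i + 1) / m)) (fun c => c.val / m) ?_ ?_
  · simpa using this
  · intro c hc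
    simp only [Finset.mem_coe, Finset.mem_filter, Finset.mem_univ, true_and] at hc
    simp only [Finset.mem_coe, Finset.mem_range]
    have h1 : m * (c.val / m) + c.val % m = c.val := Nat.div_add_mod _ _
    have h2 : m * (c.val / m + 1) = c.val + 1 := by
      rw [Nat.mul_add, mul_one]
      omega
    have h3 : c.val / m + 1 ≤ (i + 1) / m := by
      rw [Nat.le_div_iff_mul_le hm, mul_comm, h2]
      omega
    omega
  · intro c hc c' hc' hcc
    simp only [Finset.coe_filter, Set.mem_setOf_eq, Finset.mem_univ, true_and] at hc hc'
    have h1 : m * (c.val / m) + c.val % m = c.val := Nat.div_add_mod _ _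
    have h2 : m * (c'.val / m) + c'.val % m = c'.val := Nat.div_add_mod _ _
    have hcc' : c.val / m = c'.val / m := hcc
    rw [hcc'] at h1
    exact Fin.ext (by omega)

lemma card_pSet1 (i m : ℕ) :
    (pSet1 i m).card
      + (Finset.univ.filter fun c : Fin (i + 1) => c.val % m = m - 1).card = i + 1 := by
  rw [add_comm, pSet1]
  have := Finset.card_filter_add_card_filter_not
    (s := (Finset.univ : Finset (Fin (i + 1))))
    (p := fun c : Fin (i + 1) => c.val % m = m - 1)
  simpa using this

lemma sum_bool_vertex (f : Kronecker.vertex → ℕ) : ∑ v, f v = f true + f false :=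
  Fintype.sum_bool f

lemma kronQ_dim (k : Type u) [Field k] (i : ℕ) : (kronQ k i).dim = 2 * i + 1 := by
  letI : AddCommGroup ((kronQ k i).space false) := (kronQ k i).acg false
  letI : Module k ((kronQ k i).space false) := (kronQ k i).mod false
  letI : AddCommGroup ((kronQ k i).space true) := (kronQ k i).acg true
  letI : Module k ((kronQ k i).space true) := (kronQ k i).mod true
  have h1 : finrank k ((kronQ k i).space false) = i + 1 :=
    Module.finrank_fintype_fun_eq_card (η := Fin (i + 1)) k |>.trans (Fintype.card_fin _)
  have h2 : finrank k ((kronQ k i).space true) = i :=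
    Module.finrank_fintype_fun_eq_card (η := Fin i) k |>.trans (Fintype.card_fin _)
  rw [QuivRep.dim, sum_bool_vertex, h1, h2]
  omega

end Stmt12Aux

open Stmt12Aux Module in
/-- the family `{Q_i : i ≥ 0}` of indecomposable preinjective
representations of the 2-Kronecker quiver is hyperfinite, over any field. -/
theorem stmt_12 {k : Type u} [Field k] :
    QuivRepHyperfinite (Set.range (kronQ k)) := by
  intro ε hε
  set m : ℕ := ⌈1 / ε⌉₊ + 1 with hmdef
  have hm0 : 0 < m := Nat.succ_pos _
  have hmR : (0:ℝ) < m := by exact_mod_cast hm0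
  have hminv : (1:ℝ) / m ≤ ε := by
    rw [div_le_iff₀ hmR]
    have h1 : (1:ℝ) / ε ≤ (⌈1 / ε⌉₊ : ℝ) := Nat.le_ceil _
    have h2 : (1:ℝ) / ε < (m : ℝ) := by
      rw [hmdef]; push_cast; linarith
    calc (1:ℝ) = ε * (1 / ε) := by field_simp
      _ ≤ ε * m := by nlinarith
  refine ⟨2 * m, by omega, ?_⟩
  rintro M ⟨i, rfl⟩
  refine ⟨kronP k i m, ?_, i + 1, fun j => kronBlock k i m j.val hm0, ?_, ?_, ?_⟩
  · -- dimension bound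
    set D := (Finset.univ.filter fun c : Fin (i + 1) => c.val % m = m - 1).card with hD
    have hcard : (pSet1 i m).card + D = i + 1 := card_pSet1 i m
    have hDle : D ≤ (i + 1) / m := card_modSet_le i m hm0
    have hPdim : (kronP k i m).dim = i + (pSet1 i m).card := by
      have h1 : finrank k ((kronP k i m).toFun false) = (pSet1 i m).card :=
        finrank_coordSub (pSet1 i m)
      have h2 : finrank k ((kronP k i m).toFun true)
          = (Finset.univ : Finset (Fin i)).card :=
        finrank_coordSub (Finset.univ : Finset (Fin i))
      rw [SubRep.dim, sum_bool_vertex, h1, h2]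
      simp
    rw [hPdim, kronQ_dim]
    have hDreal : (D : ℝ) ≤ ε * (i + 1) := by
      calc (D : ℝ) ≤ (((i + 1) / m : ℕ) : ℝ) := Nat.cast_le.mpr hDle
        _ ≤ ((i : ℝ) + 1) / m := by exact_mod_cast Nat.cast_div_le
        _ = ((i : ℝ) + 1) * (1 / m) := by ring
        _ ≤ ((i : ℝ) + 1) * ε := by
            refine mul_le_mul_of_nonneg_left hminv (by positivity)
        _ = ε * (i + 1) := mul_comm _ _
    have hcardR : ((pSet1 i m).card : ℝ) + (D : ℝ) = (i : ℝ) + 1 := by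
      exact_mod_cast hcard
    push_cast
    nlinarith [hε.le, (Nat.cast_nonneg i : (0:ℝ) ≤ i)]
  · -- block dimensions
    intro j
    have h1 : finrank k ((kronBlock k i m j.val hm0).toFun false)
        = (bSet1 i m j.val).card := finrank_coordSub _
    have h2 : finrank k ((kronBlock k i m j.val hm0).toFun true)
        = (bSet2 i m j.val).card := finrank_coordSub _
    rw [SubRep.dim, sum_bool_vertex, h1, h2]
    have := card_bSet1_le i m j.val hm0
    have := card_bSet2_le i m j.val hm0
    omega
  · -- independence
    intro v
    cases v
    · show iSupIndep fun j : Fin (i + 1) => coordSub k (bSet1 i m j.val)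
      refine iSupIndep_coordSub _ fun j l hjl => ?_
      rw [Finset.disjoint_left]
      intro c hc hc'
      simp only [bSet1, Finset.mem_filter, Finset.mem_univ, true_and] at hc hc'
      exact hjl (Fin.ext (hc.1 ▸ hc'.1 ▸ rfl))
    · show iSupIndep fun j : Fin (i + 1) => coordSub k (bSet2 i m j.val)
      refine iSupIndep_coordSub _ fun j l hjl => ?_
      rw [Finset.disjoint_left]
      intro c hc hc'
      simp only [bSet2, Finset.mem_filter, Finset.mem_univ, true_and] at hc hc'
      exact hjl (Fin.ext (hc ▸ hc' ▸ rfl))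
  · -- sup
    intro v
    cases v
    · show (⨆ j : Fin (i + 1), coordSub k (bSet1 i m j.val)) = coordSub k (pSet1 i m)
      refine iSup_coordSub_eq _ _ ?_ ?_ ?_
      · intro j c hc
        simp only [bSet1, Finset.mem_filter, Finset.mem_univ, true_and] at hc
        simp only [pSet1, Finset.mem_filter, Finset.mem_univ, true_and]
        exact hc.2
      · intro c hc
        simp only [pSet1, Finset.mem_filter, Finset.mem_univ, true_and] at hc
        refine ⟨⟨c.val / m, lt_of_le_of_lt (Nat.div_le_self _ _) c.isLt⟩, ?_⟩
        simp only [bSet1, Finset.mem_filter, Finset.mem_univ, true_and]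
        exact hc
      · intro j l hjl
        rw [Finset.disjoint_left]
        intro c hc hc'
        simp only [bSet1, Finset.mem_filter, Finset.mem_univ, true_and] at hc hc'
        exact hjl (Fin.ext (hc.1 ▸ hc'.1 ▸ rfl))
    · show (⨆ j : Fin (i + 1), coordSub k (bSet2 i m j.val))
        = coordSub k (Finset.univ : Finset (Fin i))
      refine iSup_coordSub_eq _ _ ?_ ?_ ?_
      · intro j c _
        exact Finset.mem_univ c
      · intro c _
        refine ⟨⟨(c.val + 1) / m, ?_⟩, ?_⟩
        · exact lt_of_le_of_lt (Nat.div_le_self _ _) (Nat.succ_lt_succ c.isLt)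
        · simp only [bSet2, Finset.mem_filter, Finset.mem_univ, true_and]
      · intro j l hjl
        rw [Finset.disjoint_left]
        intro c hc hc'
        simp only [bSet2, Finset.mem_filter, Finset.mem_univ, true_and] at hc hc'
        exact hjl (Fin.ext (hc ▸ hc' ▸ rfl))
end

section
/- Let k be a field and Q a finite quiver. Suppose Q' is a subquiver of Q, i.e., Q'₀ ⊆ Q₀ and Q'₁ ⊆ Q₁ with every arrow of Q'₁ having its source and target in Q'₀. If the family of all finite-dimensional k-representations of Q' is not hyperfinite, then the family of all finite-dimensional k-representations of Q is not hyperfinite; in other words, if kQ' is not of amenable representation type, then neither is kQ. -/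
/-!
Hyperfiniteness for families of finite-dimensional representations of finite quivers,
following Elek.
-/

universe u

variable {k : Type u} [Field k] {Q : FinQuiver}

/-- `Q'` is a subquiver of `Q`: the vertices and arrows of `Q'` embed into those of `Q`,
compatibly with sources and targets. -/
structure FinQuiver.SubquiverOf (Q' Q : FinQuiver) where
  vertexEmb : Q'.vertex ↪ Q.vertex
  arrowEmb : Q'.arrow ↪ Q.arrow
  src_comm : ∀ a : Q'.arrow, Q.src (arrowEmb a) = vertexEmb (Q'.src a)
  tgt_comm : ∀ a : Q'.arrow, Q.tgt (arrowEmb a) = vertexEmb (Q'.tgt a)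

namespace Stmt15Aux

open scoped Classical

variable {k : Type u} [Field k] {Q Q' : FinQuiver}

/-- Cast along an equality of vertices of `Q'`. -/
def castM (M' : QuivRep k Q') {i j : Q'.vertex} (h : i = j) :
    M'.space i →ₗ[k] M'.space j := by
  subst h; exact LinearMap.id

/-- Extension by zero of a representation of `Q'` to a representation of `Q`. -/
noncomputable def ext (hsub : Q'.SubquiverOf Q) (M' : QuivRep k Q') : QuivRep k Q where
  space i := ∀ j : {j : Q'.vertex // hsub.vertexEmb j = i}, M'.space j.1
  map a := LinearMap.pi fun jt =>
    if h : ∃ a' : Q'.arrow, hsub.arrowEmb a' = a ∧ Q'.tgt a' = jt.1 then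
      (castM M' h.choose_spec.2).comp ((M'.map h.choose).comp
        (LinearMap.proj (⟨Q'.src h.choose, by
          rw [← hsub.src_comm, h.choose_spec.1]⟩ :
            {j : Q'.vertex // hsub.vertexEmb j = Q.src a})))
    else 0

variable (hsub : Q'.SubquiverOf Q) (M' : QuivRep k Q')

theorem cast_apply {i j : Q.vertex} (h : i = j) (y : (ext hsub M').space i)
    (v : Q'.vertex) (p : hsub.vertexEmb v = j) :
    (h ▸ y : (ext hsub M').space j) ⟨v, p⟩ = y ⟨v, p.trans h.symm⟩ := by
  subst h; rfl

theorem cast_mem {M' : QuivRep k Q'} (P : SubRep (ext hsub M')) {i j : Q.vertex}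
    (h : i = j) (y : (ext hsub M').space i) (hy : y ∈ P.toFun i) :
    (h ▸ y : (ext hsub M').space j) ∈ P.toFun j := by
  subst h; exact hy

theorem cast_map_aux (b a' : Q'.arrow) (hb : b = a') (h2 : Q'.tgt b = Q'.tgt a')
    (x : (ext hsub M').space (Q.src (hsub.arrowEmb a')))
    (ps : hsub.vertexEmb (Q'.src b) = Q.src (hsub.arrowEmb a'))
    (q : hsub.vertexEmb (Q'.src a') = Q.src (hsub.arrowEmb a')) :
    castM M' h2 (M'.map b (x ⟨Q'.src b, ps⟩)) = M'.map a' (x ⟨Q'.src a', q⟩) := by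
  subst hb; rfl

theorem ext_map_apply (a' : Q'.arrow) (x : (ext hsub M').space (Q.src (hsub.arrowEmb a')))
    (p : hsub.vertexEmb (Q'.tgt a') = Q.tgt (hsub.arrowEmb a'))
    (q : hsub.vertexEmb (Q'.src a') = Q.src (hsub.arrowEmb a')) :
    (ext hsub M').map (hsub.arrowEmb a') x ⟨Q'.tgt a', p⟩
      = M'.map a' (x ⟨Q'.src a', q⟩) := by
  have hc : ∃ b : Q'.arrow, hsub.arrowEmb b = hsub.arrowEmb a' ∧ Q'.tgt b = Q'.tgt a' :=
    ⟨a', rfl, rfl⟩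
  simp only [ext]
  erw [LinearMap.pi_apply, dif_pos hc]
  have hb : hc.choose = a' := hsub.arrowEmb.injective hc.choose_spec.1
  exact cast_map_aux hsub M' hc.choose a' hb hc.choose_spec.2 x _ q

/-- Evaluation equivalence at an embedded vertex. -/
noncomputable def evalEquiv (i' : Q'.vertex) :
    (ext hsub M').space (hsub.vertexEmb i') ≃ₗ[k] M'.space i' where
  toFun f := f ⟨i', rfl⟩
  map_add' _ _ := rfl
  map_smul' _ _ := rfl
  invFun x := fun jt => castM M' (hsub.vertexEmb.injective jt.2).symm x
  left_inv f := by
    funext jt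
    obtain ⟨j, pj⟩ := jt
    have hj : j = i' := hsub.vertexEmb.injective pj
    subst hj
    rfl
  right_inv x := rfl

/-- Pull back a subrepresentation of the extension to a subrepresentation of `M'`. -/
noncomputable def pull (P : SubRep (ext hsub M')) : SubRep M' where
  toFun i' := (P.toFun (hsub.vertexEmb i')).map
    (evalEquiv hsub M' i' : _ →ₗ[k] M'.space i')
  compat a' x hx := by
    obtain ⟨y, hy, rfl⟩ := hx
    have hs : hsub.vertexEmb (Q'.src a') = Q.src (hsub.arrowEmb a') :=
      (hsub.src_comm a').symm
    have ht : Q.tgt (hsub.arrowEmb a') = hsub.vertexEmb (Q'.tgt a') :=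
      hsub.tgt_comm a'
    have hw : (ext hsub M').map (hsub.arrowEmb a') (hs ▸ y)
        ∈ P.toFun (Q.tgt (hsub.arrowEmb a')) :=
      P.compat _ _ (cast_mem hsub P hs y hy)
    refine ⟨ht ▸ ((ext hsub M').map (hsub.arrowEmb a') (hs ▸ y)),
      cast_mem hsub P ht _ hw, ?_⟩
    show (ht ▸ ((ext hsub M').map (hsub.arrowEmb a') (hs ▸ y))) ⟨Q'.tgt a', rfl⟩ = _
    rw [cast_apply, ext_map_apply hsub M' a' (hs ▸ y) _ hs, cast_apply]
    rfl

theorem finrank_ext_of_not_mem {i : Q.vertex} (hi : ¬ ∃ i', hsub.vertexEmb i' = i) :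
    Module.finrank k ((ext hsub M').space i) = 0 := by
  haveI : IsEmpty {j : Q'.vertex // hsub.vertexEmb j = i} :=
    ⟨fun jt => hi ⟨jt.1, jt.2⟩⟩
  haveI : Subsingleton ((ext hsub M').space i) :=
    ⟨fun a b => funext fun jt => (IsEmpty.false jt).elim⟩
  exact Module.finrank_zero_of_subsingleton

theorem sum_emb (f : Q.vertex → ℕ) (hf : ∀ i, (¬ ∃ i', hsub.vertexEmb i' = i) → f i = 0) :
    ∑ i : Q.vertex, f i = ∑ i' : Q'.vertex, f (hsub.vertexEmb i') := by
  rw [← Finset.sum_image (g := hsub.vertexEmb) (f := f)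
    (fun x _ y _ h => hsub.vertexEmb.injective h)]
  exact (Finset.sum_subset (Finset.subset_univ _) fun i _ hi => hf i fun ⟨i', hi'⟩ =>
    hi (Finset.mem_image.2 ⟨i', Finset.mem_univ _, hi'⟩)).symm

theorem ext_dim : (ext hsub M').dim = M'.dim := by
  unfold QuivRep.dim
  rw [sum_emb hsub _ (fun i hi => finrank_ext_of_not_mem hsub M' hi)]
  exact Finset.sum_congr rfl fun i' _ => (evalEquiv hsub M' i').finrank_eq

theorem pull_dim (P : SubRep (ext hsub M')) : (pull hsub M' P).dim = P.dim := by
  unfold SubRep.dim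
  rw [sum_emb hsub (fun i => Module.finrank k (P.toFun i)) (fun i hi => by
    have h1 := Submodule.finrank_le (P.toFun i)
    rw [finrank_ext_of_not_mem hsub M' hi] at h1
    exact Nat.le_zero.mp h1)]
  exact Finset.sum_congr rfl fun i' _ =>
    (evalEquiv hsub M' i').finrank_map_eq (P.toFun (hsub.vertexEmb i'))

end Stmt15Aux

/-- if `Q'` is a subquiver of `Q` and the family of all finite-dimensional
`k`-representations of `Q'` is not hyperfinite, then neither is the family of all
finite-dimensional `k`-representations of `Q`; i.e. if `kQ'` is not of amenable
representation type, then neither is `kQ`. -/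
theorem stmt_15 {k : Type u} [Field k] (Q Q' : FinQuiver) (hsub : Q'.SubquiverOf Q)
    (h : ¬ QuivRepAmenable k Q') :
    ¬ QuivRepAmenable k Q := by
  intro hQ
  apply h
  intro ε hε
  obtain ⟨L, hL, hM⟩ := hQ ε hε
  refine ⟨L, hL, fun M' _ => ?_⟩
  obtain ⟨P, hP, t, N, hNL, hind, hsup⟩ := hM (Stmt15Aux.ext hsub M') (Set.mem_univ _)
  refine ⟨Stmt15Aux.pull hsub M' P, ?_, t, fun j => Stmt15Aux.pull hsub M' (N j),
    fun j => ?_, fun i' => ?_, fun i' => ?_⟩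
  · rw [Stmt15Aux.pull_dim, ← Stmt15Aux.ext_dim hsub M']
    exact hP
  · rw [Stmt15Aux.pull_dim]; exact hNL j
  · exact (hind (hsub.vertexEmb i')).map_orderIso
      (Submodule.orderIsoMapComap (Stmt15Aux.evalEquiv hsub M' i'))
  · show (⨆ j, Submodule.map _ ((N j).toFun (hsub.vertexEmb i'))) = _
    rw [← Submodule.map_iSup, hsup (hsub.vertexEmb i')]
    rfl
end
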